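/- arXiv:1310.5053 — 6 statements merged into one kernel-verified Lean document; each statement's English description precedes it below -/
import Mathlib

section
/- Let $V$ be a Hilbert space, $\beta \in (0, 1/2)$, $T>0$, $h \in L^1(0,T)$ and $f$ with $\int_0^T t^{-2\beta}\|f(t)\|_V^2\,dt < \infty$. Then $\int_0^T t^{-2\beta} \|(h*f)(t)\|_V^2\,dt \le \|h\|_{L^1(0,T)}^2 \int_0^T t^{-2\beta}\|f(t)\|_V^2\,dt$, where $(h*f)(t) = \int_0^t h(t-s)f(s)\,ds$. -/
open MeasureTheory Set
open scoped ENNReal NNReal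

private lemma conj22 : Real.HolderConjugate 2 2 := Real.HolderConjugate.two_two

private lemma rpow_half_sq (x : ℝ≥0∞) : (x ^ (1/2 : ℝ)) ^ (2:ℝ) = x := by
  rw [← ENNReal.rpow_mul]; norm_num

private lemma rpow_half_pow (x : ℝ≥0∞) : (x ^ (1/2:ℝ)) ^ (2:ℕ) = x := by
  rw [← ENNReal.rpow_natCast, ← ENNReal.rpow_mul]; norm_num

private lemma cs_lintegral {α : Type*} [MeasurableSpace α] (μ : Measure α) (a b : α → ℝ≥0∞)
    (ha : Measurable a) (hb : Measurable b) :
    (∫⁻ s, a s * b s ∂μ) ^ 2 ≤ (∫⁻ s, a s ∂μ) * (∫⁻ s, a s * b s ^ 2 ∂μ) := by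
  have key := ENNReal.lintegral_mul_le_Lp_mul_Lq μ conj22
    (f := fun s => a s ^ (1/2 : ℝ)) (g := fun s => a s ^ (1/2 : ℝ) * b s)
    ((ha.pow_const _).aemeasurable) (((ha.pow_const _).mul hb).aemeasurable)
  simp only [Pi.mul_apply] at key
  have e0 : (∫⁻ s, (a s ^ (1/2:ℝ)) * (a s ^ (1/2:ℝ) * b s) ∂μ) = ∫⁻ s, a s * b s ∂μ := by
    refine lintegral_congr fun s => ?_
    rw [← mul_assoc, ← ENNReal.rpow_add_of_nonneg _ _ (by norm_num) (by norm_num)]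
    norm_num
  have e1 : (∫⁻ s, (a s ^ (1/2:ℝ)) ^ (2:ℝ) ∂μ) = ∫⁻ s, a s ∂μ :=
    lintegral_congr fun s => rpow_half_sq _
  have e2 : (∫⁻ s, (a s ^ (1/2:ℝ) * b s) ^ (2:ℝ) ∂μ) = ∫⁻ s, a s * b s ^ 2 ∂μ := by
    refine lintegral_congr fun s => ?_
    rw [ENNReal.mul_rpow_of_nonneg _ _ (by norm_num : (0:ℝ) ≤ 2), rpow_half_sq,
      show ((2:ℝ) = ((2:ℕ):ℝ)) by norm_num, ENNReal.rpow_natCast]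
  rw [e0, e1, e2] at key
  calc (∫⁻ s, a s * b s ∂μ) ^ 2
      ≤ ((∫⁻ s, a s ∂μ) ^ (1/2:ℝ) * (∫⁻ s, a s * b s ^ 2 ∂μ) ^ (1/2:ℝ)) ^ 2 := by
        rw [sq, sq]; exact mul_le_mul' key key
    _ = (∫⁻ s, a s ∂μ) * (∫⁻ s, a s * b s ^ 2 ∂μ) := by
        rw [mul_pow, rpow_half_pow, rpow_half_pow]

/-- Weighted `L²` bound for the truncated convolution, `0 < β < 1/2`:
`∫_0^T t^{-2β} ‖(h*f)(t)‖² dt ≤ ‖h‖²_{L¹(0,T)} ∫_0^T t^{-2β} ‖f(t)‖² dt`. -/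
theorem convolution_weighted_L2_bound {V : Type*} [NormedAddCommGroup V]
    [InnerProductSpace ℂ V] [CompleteSpace V]
    (β T : ℝ) (hβ0 : 0 < β) (hβ : β < 1 / 2) (hT : 0 < T)
    (h : ℝ → ℂ) (f : ℝ → V)
    (hh : IntegrableOn h (Ioo 0 T))
    (hfm : AEStronglyMeasurable f (volume.restrict (Ioo 0 T)))
    (hf : ∫⁻ t in Ioo (0:ℝ) T, ENNReal.ofReal (t ^ (-(2 * β)) * ‖f t‖ ^ 2) < ⊤) :
    ∫⁻ t in Ioo (0:ℝ) T,
        ENNReal.ofReal (t ^ (-(2 * β)) * ‖∫ s in Ioo (0:ℝ) t, h (t - s) • f s‖ ^ 2)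
      ≤ (ENNReal.ofReal (∫ s in Ioo (0:ℝ) T, ‖h s‖)) ^ 2 *
        ∫⁻ t in Ioo (0:ℝ) T, ENNReal.ofReal (t ^ (-(2 * β)) * ‖f t‖ ^ 2) := by
  clear hf
  obtain ⟨g, hgm, hgh⟩ := hh.1
  obtain ⟨φ, hφm, hfφ⟩ := hfm
  set Hn : ℝ → ℝ≥0∞ := fun u => (‖g u‖₊ : ℝ≥0∞) with hHn
  set G : ℝ → ℝ≥0∞ := fun s => ENNReal.ofReal (s ^ (-(2*β))) * (‖φ s‖₊ : ℝ≥0∞) ^ 2 with hG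
  set L : ℝ≥0∞ := ∫⁻ u in Ioo (0:ℝ) T, Hn u with hLdef
  have mHn : Measurable Hn := hgm.measurable.nnnorm.coe_nnreal_ennreal
  have mF : Measurable fun s => (‖φ s‖₊ : ℝ≥0∞) := hφm.enorm
  have mW : Measurable fun s : ℝ => ENNReal.ofReal (s ^ (-(2*β))) :=
    (measurable_id.pow_const _).ennreal_ofReal
  have mG : Measurable G := mW.mul (mF.pow_const 2)
  have hL_eq : L = ENNReal.ofReal (∫ s in Ioo (0:ℝ) T, ‖h s‖) := by
    have e : (∫⁻ u in Ioo (0:ℝ) T, (‖h u‖₊ : ℝ≥0∞)) = L :=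
      lintegral_congr_ae (hgh.mono fun u hu => by rw [hHn]; simp [hu])
    rw [← e]; exact (ofReal_integral_norm_eq_lintegral_enorm hh).symm
  have hLne : L ≠ ⊤ := by rw [hL_eq]; exact ENNReal.ofReal_ne_top
  have hN : volume ({u | ¬ h u = g u} ∩ Ioo 0 T) = 0 := by
    have := ae_iff.mp hgh
    rwa [Measure.restrict_apply' measurableSet_Ioo] at this
  have hM : volume ({u | ¬ f u = φ u} ∩ Ioo 0 T) = 0 := by
    have := ae_iff.mp hfφ
    rwa [Measure.restrict_apply' measurableSet_Ioo] at this
  -- pointwise-in-t bound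
  have key : ∀ t ∈ Ioo (0:ℝ) T,
      ENNReal.ofReal (t ^ (-(2*β)) * ‖∫ s in Ioo (0:ℝ) t, h (t - s) • f s‖ ^ 2)
        ≤ L * ∫⁻ s in Ioo (0:ℝ) t, G s * Hn (t - s) := by
    rintro t ⟨ht0, htT⟩
    have hae : (fun s => (‖h (t - s) • f s‖₊ : ℝ≥0∞)) =ᵐ[volume.restrict (Ioo 0 t)]
        (fun s => Hn (t - s) * (‖φ s‖₊ : ℝ≥0∞)) := by
      have h1 : volume ((fun s => t - s) ⁻¹' ({u | ¬ h u = g u} ∩ Ioo 0 T)) = 0 :=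
        ((Measure.measurePreserving_sub_left volume t).quasiMeasurePreserving).preimage_null hN
      have hbad : volume ((fun s => t - s) ⁻¹' ({u | ¬ h u = g u} ∩ Ioo 0 T)
          ∪ ({u | ¬ f u = φ u} ∩ Ioo 0 T)) = 0 := measure_union_null h1 hM
      filter_upwards [ae_restrict_of_ae (measure_eq_zero_iff_ae_notMem.mp hbad),
        ae_restrict_mem measurableSet_Ioo] with s hs hsmem
      obtain ⟨hs0, hst⟩ := hsmem
      have hts : t - s ∈ Ioo (0:ℝ) T := ⟨by linarith, by linarith⟩
      have hfs : f s = φ s := by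
        by_contra hc
        exact hs (Or.inr ⟨hc, hs0, by linarith⟩)
      have hhs : h (t - s) = g (t - s) := by
        by_contra hc
        exact hs (Or.inl (mem_preimage.mpr ⟨hc, hts⟩))
      simp [hhs, hfs, nnnorm_smul, hHn, ENNReal.coe_mul]
    have s2 : (‖∫ s in Ioo (0:ℝ) t, h (t - s) • f s‖₊ : ℝ≥0∞)
        ≤ ∫⁻ s in Ioo (0:ℝ) t, Hn (t - s) * (‖φ s‖₊ : ℝ≥0∞) :=
      le_of_le_of_eq (enorm_integral_le_lintegral_enorm _) (lintegral_congr_ae hae)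
    have s3 : (∫⁻ s in Ioo (0:ℝ) t, Hn (t - s) * (‖φ s‖₊ : ℝ≥0∞)) ^ 2
        ≤ (∫⁻ s in Ioo (0:ℝ) t, Hn (t - s))
          * (∫⁻ s in Ioo (0:ℝ) t, Hn (t - s) * (‖φ s‖₊ : ℝ≥0∞) ^ 2) :=
      cs_lintegral _ _ _ (mHn.comp (measurable_const.sub measurable_id)) mF
    have s4 : (∫⁻ s in Ioo (0:ℝ) t, Hn (t - s)) ≤ L := by
      have e := (Measure.measurePreserving_sub_left volume t).setLIntegral_comp_emb
        (MeasurableEquiv.subLeft t).measurableEmbedding Hn (Ioo 0 t)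
      rw [show ((fun s => t - s) '' Ioo 0 t) = Ioo 0 t by
        rw [image_const_sub_Ioo]; simp] at e
      rw [e]
      exact lintegral_mono_set (Ioo_subset_Ioo le_rfl htT.le)
    have s5 : ENNReal.ofReal (t ^ (-(2*β)))
          * (∫⁻ s in Ioo (0:ℝ) t, Hn (t - s) * (‖φ s‖₊ : ℝ≥0∞) ^ 2)
        ≤ ∫⁻ s in Ioo (0:ℝ) t, G s * Hn (t - s) := by
      rw [← lintegral_const_mul' _ _ ENNReal.ofReal_ne_top]
      refine setLIntegral_mono' measurableSet_Ioo fun s hs => ?_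
      obtain ⟨hs0, hst⟩ := hs
      have hw : ENNReal.ofReal (t ^ (-(2*β))) ≤ ENNReal.ofReal (s ^ (-(2*β))) := by
        apply ENNReal.ofReal_le_ofReal
        rw [Real.rpow_neg ht0.le, Real.rpow_neg hs0.le]
        exact inv_anti₀ (Real.rpow_pos_of_pos hs0 _)
          (Real.rpow_le_rpow hs0.le hst.le (by positivity))
      calc ENNReal.ofReal (t ^ (-(2*β))) * (Hn (t - s) * (‖φ s‖₊ : ℝ≥0∞) ^ 2)
          = (ENNReal.ofReal (t ^ (-(2*β))) * (‖φ s‖₊ : ℝ≥0∞) ^ 2) * Hn (t - s) := by ring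
        _ ≤ (ENNReal.ofReal (s ^ (-(2*β))) * (‖φ s‖₊ : ℝ≥0∞) ^ 2) * Hn (t - s) := by
            exact mul_le_mul_left (mul_le_mul_left hw _) _
        _ = G s * Hn (t - s) := by rw [hG]
    calc ENNReal.ofReal (t ^ (-(2*β)) * ‖∫ s in Ioo (0:ℝ) t, h (t - s) • f s‖ ^ 2)
        = ENNReal.ofReal (t ^ (-(2*β)))
            * (‖∫ s in Ioo (0:ℝ) t, h (t - s) • f s‖₊ : ℝ≥0∞) ^ 2 := by
          rw [ENNReal.ofReal_mul (Real.rpow_nonneg ht0.le _),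
            ENNReal.ofReal_pow (norm_nonneg _), ofReal_norm, enorm_eq_nnnorm]
      _ ≤ ENNReal.ofReal (t ^ (-(2*β)))
            * (∫⁻ s in Ioo (0:ℝ) t, Hn (t - s) * (‖φ s‖₊ : ℝ≥0∞)) ^ 2 :=
          mul_le_mul_right (pow_le_pow_left' s2 2) _
      _ ≤ ENNReal.ofReal (t ^ (-(2*β)))
            * ((∫⁻ s in Ioo (0:ℝ) t, Hn (t - s))
              * (∫⁻ s in Ioo (0:ℝ) t, Hn (t - s) * (‖φ s‖₊ : ℝ≥0∞) ^ 2)) :=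
          mul_le_mul_right s3 _
      _ ≤ ENNReal.ofReal (t ^ (-(2*β)))
            * (L * (∫⁻ s in Ioo (0:ℝ) t, Hn (t - s) * (‖φ s‖₊ : ℝ≥0∞) ^ 2)) :=
          mul_le_mul_right (mul_le_mul_left s4 _) _
      _ = L * (ENNReal.ofReal (t ^ (-(2*β)))
            * (∫⁻ s in Ioo (0:ℝ) t, Hn (t - s) * (‖φ s‖₊ : ℝ≥0∞) ^ 2)) := by ring
      _ ≤ L * ∫⁻ s in Ioo (0:ℝ) t, G s * Hn (t - s) := mul_le_mul_right s5 _
  -- Fubini step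
  have fub : (∫⁻ t in Ioo (0:ℝ) T, ∫⁻ s in Ioo (0:ℝ) t, G s * Hn (t - s))
      ≤ L * ∫⁻ s in Ioo (0:ℝ) T, G s := by
    set k : ℝ × ℝ → ℝ≥0∞ := fun p =>
      Set.indicator {p : ℝ × ℝ | 0 < p.2 ∧ p.2 < p.1 ∧ p.1 < T}
        (fun p => G p.2 * Hn (p.1 - p.2)) p with hk
    have hEm : MeasurableSet {p : ℝ × ℝ | 0 < p.2 ∧ p.2 < p.1 ∧ p.1 < T} :=
      (measurableSet_lt measurable_const measurable_snd).inter
        ((measurableSet_lt measurable_snd measurable_fst).inter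
          (measurableSet_lt measurable_fst measurable_const))
    have hkm : Measurable k :=
      Measurable.indicator
        ((mG.comp measurable_snd).mul (mHn.comp (measurable_fst.sub measurable_snd))) hEm
    have hGne : ∀ s, G s ≠ ⊤ := fun s =>
      ENNReal.mul_ne_top ENNReal.ofReal_ne_top (ENNReal.pow_ne_top ENNReal.coe_ne_top)
    have inner_eq : ∀ t, (∫⁻ s, k (t, s))
        = Set.indicator (Ioo (0:ℝ) T) (fun t => ∫⁻ s in Ioo (0:ℝ) t, G s * Hn (t - s)) t := by
      intro t
      by_cases ht : t ∈ Ioo (0:ℝ) T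
      · rw [indicator_of_mem ht, ← lintegral_indicator measurableSet_Ioo]
        refine lintegral_congr fun s => ?_
        by_cases hs : s ∈ Ioo 0 t
        · have hmem : ((t, s) : ℝ × ℝ) ∈ {p : ℝ × ℝ | 0 < p.2 ∧ p.2 < p.1 ∧ p.1 < T} :=
            ⟨hs.1, hs.2, ht.2⟩
          rw [indicator_of_mem hs, hk]; exact indicator_of_mem hmem _
        · have hnm : ((t, s) : ℝ × ℝ) ∉ {p : ℝ × ℝ | 0 < p.2 ∧ p.2 < p.1 ∧ p.1 < T} :=
            fun hc => hs ⟨hc.1, hc.2.1⟩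
          rw [indicator_of_notMem hs, hk]; exact indicator_of_notMem hnm _
      · rw [indicator_of_notMem ht]
        have hz : ∀ s, k (t, s) = 0 := by
          intro s; rw [hk]
          have hnm : ((t, s) : ℝ × ℝ) ∉ {p : ℝ × ℝ | 0 < p.2 ∧ p.2 < p.1 ∧ p.1 < T} :=
            fun hc => ht ⟨lt_trans hc.1 hc.2.1, hc.2.2⟩
          exact indicator_of_notMem hnm _
        simp [hz]
    have lhs_eq : (∫⁻ t in Ioo (0:ℝ) T, ∫⁻ s in Ioo (0:ℝ) t, G s * Hn (t - s))
        = ∫⁻ t, ∫⁻ s, k (t, s) := by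
      rw [← lintegral_indicator measurableSet_Ioo]
      exact lintegral_congr fun t => (inner_eq t).symm
    have swap : (∫⁻ t, ∫⁻ s, k (t, s)) = ∫⁻ s, ∫⁻ t, k (t, s) :=
      lintegral_lintegral_swap hkm.aemeasurable
    have outer_le : ∀ s : ℝ, (∫⁻ t, k (t, s))
        ≤ Set.indicator (Ioo (0:ℝ) T) (fun s => G s * L) s := by
      intro s
      by_cases hs : s ∈ Ioo (0:ℝ) T
      · rw [indicator_of_mem hs]
        have e : (fun t => k (t, s)) = Set.indicator (Ioo s T) (fun t => G s * Hn (t - s)) := by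
          funext t
          by_cases ht : t ∈ Ioo s T
          · have hmem : ((t, s) : ℝ × ℝ) ∈ {p : ℝ × ℝ | 0 < p.2 ∧ p.2 < p.1 ∧ p.1 < T} :=
              ⟨hs.1, ht.1, ht.2⟩
            rw [indicator_of_mem ht, hk]; exact indicator_of_mem hmem _
          · have hnm : ((t, s) : ℝ × ℝ) ∉ {p : ℝ × ℝ | 0 < p.2 ∧ p.2 < p.1 ∧ p.1 < T} :=
              fun hc => ht ⟨hc.2.1, hc.2.2⟩
            rw [indicator_of_notMem ht, hk]; exact indicator_of_notMem hnm _
        rw [e, lintegral_indicator measurableSet_Ioo, lintegral_const_mul' _ _ (hGne s)]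
        refine mul_le_mul_right ?_ _
        have e2 := (measurePreserving_add_right volume s).setLIntegral_comp_emb
          (MeasurableEquiv.addRight s).measurableEmbedding (fun t => Hn (t - s)) (Ioo 0 (T - s))
        rw [show ((fun x => x + s) '' Ioo 0 (T - s)) = Ioo s T by
          rw [image_add_const_Ioo]; simp] at e2
        rw [← e2]
        calc (∫⁻ a in Ioo (0:ℝ) (T - s), Hn (a + s - s))
            = ∫⁻ a in Ioo (0:ℝ) (T - s), Hn a := by
              refine lintegral_congr fun a => ?_; rw [add_sub_cancel_right]
          _ ≤ L := lintegral_mono_set (Ioo_subset_Ioo le_rfl (by linarith [hs.1]))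
      · rw [indicator_of_notMem hs]
        have hz : ∀ t, k (t, s) = 0 := by
          intro t; rw [hk]
          have hnm : ((t, s) : ℝ × ℝ) ∉ {p : ℝ × ℝ | 0 < p.2 ∧ p.2 < p.1 ∧ p.1 < T} :=
            fun hc => hs ⟨hc.1, lt_trans hc.2.1 hc.2.2⟩
          exact indicator_of_notMem hnm _
        simp [hz]
    calc (∫⁻ t in Ioo (0:ℝ) T, ∫⁻ s in Ioo (0:ℝ) t, G s * Hn (t - s))
        = ∫⁻ s, ∫⁻ t, k (t, s) := by rw [lhs_eq, swap]
      _ ≤ ∫⁻ s, Set.indicator (Ioo (0:ℝ) T) (fun s => G s * L) s :=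
          lintegral_mono outer_le
      _ = ∫⁻ s in Ioo (0:ℝ) T, G s * L := lintegral_indicator measurableSet_Ioo _
      _ = (∫⁻ s in Ioo (0:ℝ) T, G s) * L := lintegral_mul_const' _ _ hLne
      _ = L * ∫⁻ s in Ioo (0:ℝ) T, G s := mul_comm _ _
  have Gf : (∫⁻ s in Ioo (0:ℝ) T, G s)
      = ∫⁻ t in Ioo (0:ℝ) T, ENNReal.ofReal (t ^ (-(2 * β)) * ‖f t‖ ^ 2) := by
    refine lintegral_congr_ae ?_
    filter_upwards [hfφ, ae_restrict_mem measurableSet_Ioo] with s hs hmem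
    rw [hG]
    simp only
    rw [ENNReal.ofReal_mul (Real.rpow_nonneg hmem.1.le _),
      ENNReal.ofReal_pow (norm_nonneg _), ofReal_norm, enorm_eq_nnnorm, hs]
  calc (∫⁻ t in Ioo (0:ℝ) T,
        ENNReal.ofReal (t ^ (-(2 * β)) * ‖∫ s in Ioo (0:ℝ) t, h (t - s) • f s‖ ^ 2))
      ≤ ∫⁻ t in Ioo (0:ℝ) T, L * ∫⁻ s in Ioo (0:ℝ) t, G s * Hn (t - s) := by
        refine lintegral_mono_ae ?_
        filter_upwards [ae_restrict_mem measurableSet_Ioo] with t ht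
        exact key t ht
    _ = L * ∫⁻ t in Ioo (0:ℝ) T, ∫⁻ s in Ioo (0:ℝ) t, G s * Hn (t - s) :=
        lintegral_const_mul' _ _ hLne
    _ ≤ L * (L * ∫⁻ s in Ioo (0:ℝ) T, G s) := mul_le_mul_right fub _
    _ = L ^ 2 * ∫⁻ s in Ioo (0:ℝ) T, G s := by ring
    _ = (ENNReal.ofReal (∫ s in Ioo (0:ℝ) T, ‖h s‖)) ^ 2 *
        ∫⁻ t in Ioo (0:ℝ) T, ENNReal.ofReal (t ^ (-(2 * β)) * ‖f t‖ ^ 2) := by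
        rw [hL_eq, Gf]
end

section
/- Let $V$ be a Hilbert space, $\beta \in (0,1/2)$, $T>0$, $h \in L^1(0,T)$ and $f$ with finite Gagliardo seminorm and weighted norm. Then the double integral $\int_0^T \int_0^t \Big(\int_s^t |h(\tau)|\,\|f(t-\tau)\|_V^2\, d\tau\Big)(t-s)^{-1-2\beta}\,ds\,dt \le \frac{1}{2\beta}\,\|h\|_{L^1(0,T)} \int_0^T t^{-2\beta}\|f(t)\|_V^2\,dt$. -/
open MeasureTheory Set

lemma lintegral_triangle_swap (c : ℝ) (K : ℝ → ℝ → ENNReal)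
    (hK : Measurable fun p : ℝ × ℝ => K p.1 p.2) :
    ∫⁻ a in Ioo 0 c, ∫⁻ b in Ioo a c, K a b
      = ∫⁻ b in Ioo 0 c, ∫⁻ a in Ioo 0 b, K a b := by
  set f : ℝ → ℝ → ENNReal := fun a b =>
    if 0 < a ∧ a < b ∧ b < c then K a b else 0 with hf
  have hfm : Measurable (Function.uncurry f) := by
    apply Measurable.ite _ hK measurable_const
    exact (measurableSet_lt measurable_const measurable_fst).inter
      ((measurableSet_lt measurable_fst measurable_snd).inter
        (measurableSet_lt measurable_snd measurable_const))
  have h1 : ∫⁻ a, ∫⁻ b, f a b = ∫⁻ a in Ioo 0 c, ∫⁻ b in Ioo a c, K a b := by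
    rw [← lintegral_indicator measurableSet_Ioo]
    refine lintegral_congr fun a => ?_
    by_cases ha : a ∈ Ioo 0 c
    · rw [indicator_of_mem ha, ← lintegral_indicator measurableSet_Ioo]
      refine lintegral_congr fun b => ?_
      by_cases hb : b ∈ Ioo a c
      · rw [indicator_of_mem hb, hf]
        exact if_pos ⟨ha.1, hb.1, hb.2⟩
      · rw [indicator_of_notMem hb, hf]
        have : ¬(0 < a ∧ a < b ∧ b < c) := fun h => hb ⟨h.2.1, h.2.2⟩
        simp [this]
    · rw [indicator_of_notMem ha]
      have : ∀ b, f a b = 0 := by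
        intro b; rw [hf]
        have : ¬(0 < a ∧ a < b ∧ b < c) := by
          rintro ⟨h1, h2, h3⟩; exact ha ⟨h1, h2.trans h3⟩
        simp [this]
      simp [this]
  have h2 : ∫⁻ b, ∫⁻ a, f a b = ∫⁻ b in Ioo 0 c, ∫⁻ a in Ioo 0 b, K a b := by
    rw [← lintegral_indicator measurableSet_Ioo]
    refine lintegral_congr fun b => ?_
    by_cases hb : b ∈ Ioo 0 c
    · rw [indicator_of_mem hb, ← lintegral_indicator measurableSet_Ioo]
      refine lintegral_congr fun a => ?_
      by_cases ha : a ∈ Ioo 0 b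
      · rw [indicator_of_mem ha, hf]
        exact if_pos ⟨ha.1, ha.2, hb.2⟩
      · rw [indicator_of_notMem ha, hf]
        have : ¬(0 < a ∧ a < b ∧ b < c) := fun h => ha ⟨h.1, h.2.1⟩
        simp [this]
    · rw [indicator_of_notMem hb]
      have : ∀ a, f a b = 0 := by
        intro a; rw [hf]
        have : ¬(0 < a ∧ a < b ∧ b < c) := by
          rintro ⟨h1, h2, h3⟩; exact hb ⟨h1.trans h2, h3⟩
        simp [this]
      simp [this]
  rw [← h1, ← h2, lintegral_lintegral_swap hfm.aemeasurable]

lemma key_s_bound {β t τ : ℝ} (hβ : 0 < β) (h0 : 0 < τ) (hτt : τ < t) :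
    ∫⁻ s in Ioo 0 τ, ENNReal.ofReal ((t - s) ^ (-(1 + 2 * β)))
      ≤ ENNReal.ofReal (1 / (2 * β) * (t - τ) ^ (-(2 * β))) := by
  have hcont : ContinuousOn (fun s : ℝ => (t - s) ^ (-(1 + 2 * β))) (Icc 0 τ) := by
    apply ContinuousOn.rpow_const (by fun_prop)
    intro s hs
    left
    have := hs.2
    nlinarith
  have hint : IntegrableOn (fun s : ℝ => (t - s) ^ (-(1 + 2 * β))) (Ioo 0 τ) :=
    (hcont.integrableOn_compact isCompact_Icc).mono_set Ioo_subset_Icc_self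
  have hnn : 0 ≤ᵐ[volume.restrict (Ioo 0 τ)]
      fun s : ℝ => (t - s) ^ (-(1 + 2 * β)) := by
    filter_upwards [ae_restrict_mem measurableSet_Ioo] with s hs
    exact Real.rpow_nonneg (by linarith [hs.2]) _
  rw [← ofReal_integral_eq_lintegral_ofReal hint hnn]
  apply ENNReal.ofReal_le_ofReal
  have hIooIoc : ∫ s in Ioo 0 τ, (t - s) ^ (-(1 + 2 * β))
      = ∫ s in (0:ℝ)..τ, (t - s) ^ (-(1 + 2 * β)) := by
    rw [intervalIntegral.integral_of_le h0.le, integral_Ioc_eq_integral_Ioo]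
  rw [hIooIoc, intervalIntegral.integral_comp_sub_left (fun u => u ^ (-(1 + 2 * β))) t,
    integral_rpow (Or.inr ⟨by intro hc; nlinarith, by
      rw [uIcc_of_le (by linarith)]
      intro hc
      exact absurd hc.1 (by push_neg; nlinarith)⟩)]
  have he : -(1 + 2 * β) + 1 = -(2 * β) := by ring
  rw [he]
  have h1 : (0:ℝ) < t ^ (-(2*β)) := Real.rpow_pos_of_pos (by linarith) _
  rw [div_le_iff_of_neg (by linarith : -(2*β) < 0)]
  have h2 : (0:ℝ) ≤ (t - τ) ^ (-(2*β)) := Real.rpow_nonneg (by linarith) _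
  have : 1 / (2 * β) * (t - τ) ^ (-(2 * β)) * -(2 * β) = -((t - τ) ^ (-(2 * β))) := by
    field_simp
  rw [this, sub_zero]
  linarith

lemma lintegral_Ioo_comp_sub (Φ : ℝ → ENNReal) (τ T : ℝ) :
    ∫⁻ t in Ioo τ T, Φ (t - τ) = ∫⁻ u in Ioo 0 (T - τ), Φ u := by
  have hmp : MeasurePreserving (fun u : ℝ => u + τ) volume volume :=
    measurePreserving_add_right volume τ
  have hemb : MeasurableEmbedding (fun u : ℝ => u + τ) :=
    (MeasurableEquiv.addRight τ).measurableEmbedding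
  have := hmp.setLIntegral_comp_preimage_emb hemb (fun t => Φ (t - τ)) (Ioo τ T)
  have hpre : (fun u : ℝ => u + τ) ⁻¹' Ioo τ T = Ioo 0 (T - τ) := by
    ext u
    simp only [mem_preimage, mem_Ioo]
    constructor <;> rintro ⟨h1, h2⟩ <;> constructor <;> linarith
  rw [hpre] at this
  rw [← this]
  congr 1
  ext u
  simp

/-- Key intermediate estimate in the proof that convolution by an `L¹`
kernel is bounded on `H^β(0,T;V)`, `0 < β < 1/2`:
`∫_0^T ∫_0^t (∫_s^t |h(τ)| ‖f(t-τ)‖² dτ) (t-s)^{-1-2β} ds dt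
  ≤ (1/(2β)) ‖h‖_{L¹} ∫_0^T t^{-2β} ‖f(t)‖² dt`. -/
theorem convolution_Gagliardo_tail_estimate {V : Type*} [NormedAddCommGroup V]
    [InnerProductSpace ℂ V] [CompleteSpace V]
    (β T : ℝ) (hβ0 : 0 < β) (hβ : β < 1 / 2) (hT : 0 < T)
    (h : ℝ → ℂ) (f : ℝ → V)
    (hh : IntegrableOn h (Ioo 0 T))
    (hfm : AEStronglyMeasurable f (volume.restrict (Ioo 0 T)))
    (hfw : ∫⁻ t in Ioo (0:ℝ) T, ENNReal.ofReal (t ^ (-(2 * β)) * ‖f t‖ ^ 2) < ⊤)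
    (hfg : ∫⁻ t in Ioo (0:ℝ) T, ∫⁻ s in Ioo (0:ℝ) t,
        ENNReal.ofReal (‖f t - f s‖ ^ 2 / (t - s) ^ (1 + 2 * β)) < ⊤) :
    ∫⁻ t in Ioo (0:ℝ) T, ∫⁻ s in Ioo (0:ℝ) t,
        (∫⁻ τ in Ioo s t, ENNReal.ofReal (‖h τ‖ * ‖f (t - τ)‖ ^ 2)) *
          ENNReal.ofReal ((t - s) ^ (-(1 + 2 * β)))
      ≤ ENNReal.ofReal (1 / (2 * β)) *
          ENNReal.ofReal (∫ s in Ioo (0:ℝ) T, ‖h s‖) *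
          ∫⁻ t in Ioo (0:ℝ) T, ENNReal.ofReal (t ^ (-(2 * β)) * ‖f t‖ ^ 2) := by
  -- measurable representatives of the relevant nonnegative functions
  have hHa : AEMeasurable (fun τ => ENNReal.ofReal ‖h τ‖) (volume.restrict (Ioo 0 T)) :=
    hh.aestronglyMeasurable.norm.aemeasurable.ennreal_ofReal
  set H : ℝ → ENNReal := hHa.mk _ with hHdef
  have hHm : Measurable H := hHa.measurable_mk
  have hH : (fun τ => ENNReal.ofReal ‖h τ‖) =ᵐ[volume.restrict (Ioo 0 T)] H := hHa.ae_eq_mk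
  have hFa : AEMeasurable (fun u => ENNReal.ofReal (‖f u‖ ^ 2)) (volume.restrict (Ioo 0 T)) :=
    ((hfm.norm.aemeasurable.pow_const 2).ennreal_ofReal)
  set F : ℝ → ENNReal := hFa.mk _ with hFdef
  have hFm : Measurable F := hFa.measurable_mk
  have hF : (fun u => ENNReal.ofReal (‖f u‖ ^ 2)) =ᵐ[volume.restrict (Ioo 0 T)] F :=
    hFa.ae_eq_mk
  -- the bad set for `F`
  set N : Set ℝ := {u | ¬ ENNReal.ofReal (‖f u‖ ^ 2) = F u} ∩ Ioo 0 T with hNdef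
  have hN : volume N = 0 := by
    have := hF
    rw [Filter.EventuallyEq, ae_iff] at this
    rwa [Measure.restrict_apply' measurableSet_Ioo] at this
  -- the weight function `Φ`
  set Φ : ℝ → ENNReal := fun u => F u * ENNReal.ofReal (1 / (2 * β) * u ^ (-(2 * β)))
    with hΦdef
  have hΦm : Measurable Φ := by
    apply hFm.mul
    fun_prop
  -- Step A: replace `h`, `f` by their measurable representatives in the inner integral
  have stepA : ∀ t ∈ Ioo (0:ℝ) T, ∀ s ∈ Ioo (0:ℝ) t,
      ∫⁻ τ in Ioo s t, ENNReal.ofReal (‖h τ‖ * ‖f (t - τ)‖ ^ 2)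
        = ∫⁻ τ in Ioo s t, H τ * F (t - τ) := by
    intro t ht s hs
    have hsub : Ioo s t ⊆ Ioo (0:ℝ) T := Ioo_subset_Ioo hs.1.le ht.2.le
    have h1 : ∀ᵐ τ ∂volume.restrict (Ioo s t), ENNReal.ofReal ‖h τ‖ = H τ :=
      ae_restrict_of_ae_restrict_of_subset hsub hH
    have hpre : volume ((fun τ : ℝ => t - τ) ⁻¹' N) = 0 :=
      (Measure.measurePreserving_sub_left volume t).quasiMeasurePreserving.preimage_null hN
    have h2 : ∀ᵐ τ ∂volume.restrict (Ioo s t), (t - τ) ∉ N := by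
      refine ae_restrict_of_ae ?_
      rw [ae_iff]
      simp only [not_not]
      exact hpre
    refine lintegral_congr_ae ?_
    filter_upwards [h1, h2, ae_restrict_mem measurableSet_Ioo] with τ e1 e2 hτ
    have hmem : t - τ ∈ Ioo (0:ℝ) T := by
      constructor
      · linarith [hτ.2]
      · have := hs.1
        have := ht.2
        have := hτ.1
        linarith
    have e3 : ENNReal.ofReal (‖f (t - τ)‖ ^ 2) = F (t - τ) := by
      by_contra hc
      exact e2 ⟨hc, hmem⟩
    rw [ENNReal.ofReal_mul (norm_nonneg _), e1, e3]
  -- main chain of (in)equalities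
  calc
    ∫⁻ t in Ioo (0:ℝ) T, ∫⁻ s in Ioo (0:ℝ) t,
        (∫⁻ τ in Ioo s t, ENNReal.ofReal (‖h τ‖ * ‖f (t - τ)‖ ^ 2)) *
          ENNReal.ofReal ((t - s) ^ (-(1 + 2 * β)))
      = ∫⁻ t in Ioo (0:ℝ) T, ∫⁻ s in Ioo (0:ℝ) t,
          (∫⁻ τ in Ioo s t, H τ * F (t - τ)) *
            ENNReal.ofReal ((t - s) ^ (-(1 + 2 * β))) := by
        refine setLIntegral_congr_fun measurableSet_Ioo (
          fun t ht => ?_)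
        refine setLIntegral_congr_fun measurableSet_Ioo (
          fun s hs => ?_)
        rw [stepA t ht s hs]
    _ ≤ ∫⁻ t in Ioo (0:ℝ) T, ∫⁻ τ in Ioo (0:ℝ) t, H τ * Φ (t - τ) := by
        refine setLIntegral_mono' measurableSet_Ioo fun t ht => ?_
        have swap1 : ∫⁻ s in Ioo (0:ℝ) t, ∫⁻ τ in Ioo s t,
              (H τ * F (t - τ)) * ENNReal.ofReal ((t - s) ^ (-(1 + 2 * β)))
            = ∫⁻ τ in Ioo (0:ℝ) t, ∫⁻ s in Ioo (0:ℝ) τ,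
              (H τ * F (t - τ)) * ENNReal.ofReal ((t - s) ^ (-(1 + 2 * β))) := by
          refine lintegral_triangle_swap t
            (fun s τ => (H τ * F (t - τ)) * ENNReal.ofReal ((t - s) ^ (-(1 + 2 * β)))) ?_
          apply Measurable.mul
          · exact ((hHm.comp measurable_snd).mul
              (hFm.comp (measurable_const.sub measurable_snd)))
          · fun_prop
        calc
          ∫⁻ s in Ioo (0:ℝ) t, (∫⁻ τ in Ioo s t, H τ * F (t - τ)) *
                ENNReal.ofReal ((t - s) ^ (-(1 + 2 * β)))
            = ∫⁻ s in Ioo (0:ℝ) t, ∫⁻ τ in Ioo s t,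
                (H τ * F (t - τ)) * ENNReal.ofReal ((t - s) ^ (-(1 + 2 * β))) := by
              refine lintegral_congr fun s => ?_
              exact (lintegral_mul_const' _ _ ENNReal.ofReal_ne_top).symm
          _ = ∫⁻ τ in Ioo (0:ℝ) t, ∫⁻ s in Ioo (0:ℝ) τ,
                (H τ * F (t - τ)) * ENNReal.ofReal ((t - s) ^ (-(1 + 2 * β))) := swap1
          _ ≤ ∫⁻ τ in Ioo (0:ℝ) t, H τ * Φ (t - τ) := by
              refine setLIntegral_mono' measurableSet_Ioo fun τ hτ => ?_
              have hpull : ∫⁻ s in Ioo (0:ℝ) τ,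
                    (H τ * F (t - τ)) * ENNReal.ofReal ((t - s) ^ (-(1 + 2 * β)))
                  = (H τ * F (t - τ)) *
                    ∫⁻ s in Ioo (0:ℝ) τ, ENNReal.ofReal ((t - s) ^ (-(1 + 2 * β))) :=
                lintegral_const_mul _ (by fun_prop)
              rw [hpull]
              calc
                (H τ * F (t - τ)) *
                      ∫⁻ s in Ioo (0:ℝ) τ, ENNReal.ofReal ((t - s) ^ (-(1 + 2 * β)))
                  ≤ (H τ * F (t - τ)) *
                      ENNReal.ofReal (1 / (2 * β) * (t - τ) ^ (-(2 * β))) :=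
                    mul_le_mul_right (key_s_bound hβ0 hτ.1 hτ.2) _
                _ = H τ * Φ (t - τ) := by rw [hΦdef]; ring
          _ = ∫⁻ τ in Ioo (0:ℝ) t, H τ * Φ (t - τ) := rfl
    _ = ∫⁻ τ in Ioo (0:ℝ) T, ∫⁻ t in Ioo τ T, H τ * Φ (t - τ) := by
        refine (lintegral_triangle_swap T (fun τ t => H τ * Φ (t - τ)) ?_).symm
        exact (hHm.comp measurable_fst).mul
          (hΦm.comp (measurable_snd.sub measurable_fst))
    _ = ∫⁻ τ in Ioo (0:ℝ) T, H τ * ∫⁻ u in Ioo 0 (T - τ), Φ u := by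
        refine lintegral_congr fun τ => ?_
        rw [lintegral_const_mul (H τ) (show Measurable fun t : ℝ => Φ (t - τ) from hΦm.comp (measurable_id.sub measurable_const)), lintegral_Ioo_comp_sub]
    _ ≤ ∫⁻ τ in Ioo (0:ℝ) T, H τ * ∫⁻ u in Ioo (0:ℝ) T, Φ u := by
        refine setLIntegral_mono' measurableSet_Ioo fun τ hτ => ?_
        refine mul_le_mul_right (lintegral_mono_set (Ioo_subset_Ioo_right ?_)) _
        linarith [hτ.1]
    _ = (∫⁻ τ in Ioo (0:ℝ) T, H τ) * ∫⁻ u in Ioo (0:ℝ) T, Φ u :=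
        lintegral_mul_const'' _ hHm.aemeasurable
    _ = ENNReal.ofReal (∫ s in Ioo (0:ℝ) T, ‖h s‖) *
          (ENNReal.ofReal (1 / (2 * β)) *
            ∫⁻ u in Ioo (0:ℝ) T, ENNReal.ofReal (u ^ (-(2 * β)) * ‖f u‖ ^ 2)) := by
        have e1 : ∫⁻ τ in Ioo (0:ℝ) T, H τ
            = ENNReal.ofReal (∫ s in Ioo (0:ℝ) T, ‖h s‖) := by
          rw [← lintegral_congr_ae hH,
            ← ofReal_integral_eq_lintegral_ofReal hh.norm
              (Filter.Eventually.of_forall fun _ => norm_nonneg _)]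
        have e2 : ∫⁻ u in Ioo (0:ℝ) T, Φ u
            = ENNReal.ofReal (1 / (2 * β)) *
              ∫⁻ u in Ioo (0:ℝ) T, ENNReal.ofReal (u ^ (-(2 * β)) * ‖f u‖ ^ 2) := by
          rw [← lintegral_const_mul' _ _ ENNReal.ofReal_ne_top]
          refine lintegral_congr_ae ?_
          filter_upwards [hF, ae_restrict_mem measurableSet_Ioo] with u hu hmem
          rw [hΦdef]
          simp only
          rw [← hu, ENNReal.ofReal_mul (by positivity : (0:ℝ) ≤ 1 / (2 * β)),
            ENNReal.ofReal_mul (Real.rpow_nonneg hmem.1.le _)]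
          ring
        rw [e1, e2]
    _ = ENNReal.ofReal (1 / (2 * β)) *
          ENNReal.ofReal (∫ s in Ioo (0:ℝ) T, ‖h s‖) *
          ∫⁻ t in Ioo (0:ℝ) T, ENNReal.ofReal (t ^ (-(2 * β)) * ‖f t‖ ^ 2) := by ring
end

section
/- Let $V$ be a Hilbert space, $0 < \beta < \alpha < 1$, $\phi \in H^\beta(0,T;\mathbb{C})$ and $f \in C^\alpha([0,T]; V)$ ($\alpha$-Hölder continuous). Then the product $\phi f$ belongs to $H^\beta(0,T;V)$, and its Gagliardo seminorm satisfies $[\phi f]_{H^\beta(0,T;V)}^2 \le 2\Big(\frac{T^{2(\alpha-\beta)}}{2(\alpha-\beta)}[f]_{C^\alpha}^2 \|\phi\|_{L^2(0,T)}^2 + \|f\|_{L^\infty(0,T;V)}^2 [\phi]_{H^\beta(0,T)}^2\Big)$. -/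
open MeasureTheory Set

private lemma aux_integrableOn (t r : ℝ) (ht : 0 < t) (hr : -1 < r) :
    IntegrableOn (fun s => (t - s) ^ r) (Ioo 0 t) := by
  have := (intervalIntegral.intervalIntegrable_rpow' (a := 0) (b := t) hr).comp_sub_left t
  rw [intervalIntegrable_iff] at this
  refine this.mono_set ?_
  rw [sub_zero, sub_self, uIoc_of_ge ht.le]
  exact Ioo_subset_Ioc_self

private lemma aux_integral_eq (t r : ℝ) (ht : 0 < t) (hr : -1 < r) :
    ∫ s in Ioo 0 t, (t - s) ^ r = t ^ (r + 1) / (r + 1) := by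
  rw [← MeasureTheory.integral_Ioc_eq_integral_Ioo, ← intervalIntegral.integral_of_le ht.le,
    intervalIntegral.integral_comp_sub_left (fun x => x ^ r) t]
  simp only [sub_zero, sub_self]
  rw [integral_rpow (Or.inl hr),
    Real.zero_rpow (by linarith : r + 1 ≠ 0)]
  ring

/-- **Lemma 7.3.** If `0 < β < α < 1`, `φ ∈ H^β(0,T;ℂ)` and
`f ∈ C^α([0,T];V)`, then the product `φ f` belongs to `H^β(0,T;V)` with
`[φf]²_{H^β} ≤ 2 ( T^{2(α-β)}/(2(α-β)) [f]²_{C^α} ‖φ‖²_{L²} + ‖f‖²_∞ [φ]²_{H^β} )`. -/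
theorem product_Hoelder_Hbeta {V : Type*} [NormedAddCommGroup V]
    [InnerProductSpace ℂ V] [CompleteSpace V]
    (T α β : ℝ) (hT : 0 < T) (hβ0 : 0 < β) (hβα : β < α) (hα : α < 1)
    (φ : ℝ → ℂ) (f : ℝ → V) (Hf Mf : ℝ)
    (hφ2 : IntegrableOn (fun t => ‖φ t‖ ^ 2) (Ioo 0 T))
    (hφG : ∫⁻ t in Ioo (0:ℝ) T, ∫⁻ s in Ioo (0:ℝ) t,
        ENNReal.ofReal (‖φ t - φ s‖ ^ 2 / (t - s) ^ (1 + 2 * β)) ≠ ⊤)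
    (hHf : ∀ s ∈ Icc (0:ℝ) T, ∀ t ∈ Icc (0:ℝ) T, ‖f t - f s‖ ≤ Hf * |t - s| ^ α)
    (hMf : ∀ t ∈ Icc (0:ℝ) T, ‖f t‖ ≤ Mf) :
    (∫⁻ t in Ioo (0:ℝ) T, ∫⁻ s in Ioo (0:ℝ) t,
        ENNReal.ofReal (‖φ t • f t - φ s • f s‖ ^ 2 / (t - s) ^ (1 + 2 * β)) ≠ ⊤) ∧
    ∫⁻ t in Ioo (0:ℝ) T, ∫⁻ s in Ioo (0:ℝ) t,
        ENNReal.ofReal (‖φ t • f t - φ s • f s‖ ^ 2 / (t - s) ^ (1 + 2 * β))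
      ≤ 2 * (ENNReal.ofReal (T ^ (2 * (α - β)) / (2 * (α - β)) * Hf ^ 2 *
              ∫ t in Ioo (0:ℝ) T, ‖φ t‖ ^ 2) +
            ENNReal.ofReal (Mf ^ 2) *
              ∫⁻ t in Ioo (0:ℝ) T, ∫⁻ s in Ioo (0:ℝ) t,
                ENNReal.ofReal (‖φ t - φ s‖ ^ 2 / (t - s) ^ (1 + 2 * β))) := by
  set γ : ℝ := 2 * (α - β) with hγdef
  set p : ℝ := 1 + 2 * β with hpdef
  have hγ : 0 < γ := by rw [hγdef]; linarith
  set C : ℝ := T ^ γ / γ with hCdef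
  have hC : 0 ≤ C := by
    rw [hCdef]; positivity
  set G := ∫⁻ t in Ioo (0:ℝ) T, ∫⁻ s in Ioo (0:ℝ) t,
      ENNReal.ofReal (‖φ t - φ s‖ ^ 2 / (t - s) ^ p) with hGdef
  set I : ℝ := ∫ t in Ioo (0:ℝ) T, ‖φ t‖ ^ 2 with hIdef
  have hI : 0 ≤ I := by
    rw [hIdef]
    exact setIntegral_nonneg measurableSet_Ioo (fun x _ => sq_nonneg _)
  -- pointwise inequality
  have hpt : ∀ t ∈ Ioo (0:ℝ) T, ∀ s ∈ Ioo (0:ℝ) t,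
      ENNReal.ofReal (‖φ t • f t - φ s • f s‖ ^ 2 / (t - s) ^ p)
        ≤ ENNReal.ofReal ((2 * Hf ^ 2 * ‖φ t‖ ^ 2) * (t - s) ^ (γ - 1))
          + ENNReal.ofReal (2 * Mf ^ 2) *
              ENNReal.ofReal (‖φ t - φ s‖ ^ 2 / (t - s) ^ p) := by
    intro t ht s hs
    have hd : 0 < t - s := by linarith [hs.2]
    have hdp : 0 < (t - s) ^ p := Real.rpow_pos_of_pos hd p
    have htI : t ∈ Icc (0:ℝ) T := ⟨ht.1.le, ht.2.le⟩
    have hsI : s ∈ Icc (0:ℝ) T := ⟨hs.1.le, by linarith [hs.2, ht.2]⟩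
    have habs : |t - s| = t - s := abs_of_pos hd
    have hf1 : ‖f t - f s‖ ≤ Hf * (t - s) ^ α := by
      have := hHf s hsI t htI
      rwa [habs] at this
    have hrsq : ((t - s) ^ α) ^ 2 = (t - s) ^ (2 * α) := by
      rw [← Real.rpow_natCast ((t - s) ^ α) 2, ← Real.rpow_mul hd.le]
      norm_num
      congr 1
      ring
    have hfs : ‖f t - f s‖ ^ 2 ≤ Hf ^ 2 * (t - s) ^ (2 * α) := by
      have h := pow_le_pow_left₀ (norm_nonneg _) hf1 2
      rw [mul_pow, hrsq] at h
      exact h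
    have hfsM : ‖f s‖ ^ 2 ≤ Mf ^ 2 :=
      pow_le_pow_left₀ (norm_nonneg _) (hMf s hsI) 2
    have hsplit : φ t • f t - φ s • f s = φ t • (f t - f s) + (φ t - φ s) • f s := by
      rw [smul_sub, sub_smul]; abel
    have h1 : ‖φ t • f t - φ s • f s‖ ^ 2
        ≤ 2 * (‖φ t‖ ^ 2 * ‖f t - f s‖ ^ 2) + 2 * (‖φ t - φ s‖ ^ 2 * ‖f s‖ ^ 2) := by
      have hn : ‖φ t • f t - φ s • f s‖ ≤ ‖φ t‖ * ‖f t - f s‖ + ‖φ t - φ s‖ * ‖f s‖ := by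
        rw [hsplit]
        refine (norm_add_le _ _).trans ?_
        rw [norm_smul, norm_smul]
      nlinarith [norm_nonneg (φ t • f t - φ s • f s),
        sq_nonneg (‖φ t‖ * ‖f t - f s‖ - ‖φ t - φ s‖ * ‖f s‖),
        mul_nonneg (norm_nonneg (φ t)) (norm_nonneg (f t - f s)),
        mul_nonneg (norm_nonneg (φ t - φ s)) (norm_nonneg (f s))]
    have e1 : (t - s) ^ (2 * α) / (t - s) ^ p = (t - s) ^ (γ - 1) := by
      rw [← Real.rpow_sub hd]
      congr 1
      rw [hγdef, hpdef]; ring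
    have hreal : ‖φ t • f t - φ s • f s‖ ^ 2 / (t - s) ^ p
        ≤ (2 * Hf ^ 2 * ‖φ t‖ ^ 2) * (t - s) ^ (γ - 1)
          + 2 * Mf ^ 2 * (‖φ t - φ s‖ ^ 2 / (t - s) ^ p) := by
      have hnum : ‖φ t • f t - φ s • f s‖ ^ 2
          ≤ (2 * Hf ^ 2 * ‖φ t‖ ^ 2) * (t - s) ^ (2 * α)
            + (2 * Mf ^ 2) * ‖φ t - φ s‖ ^ 2 := by
        nlinarith [mul_le_mul_of_nonneg_left hfs (sq_nonneg ‖φ t‖),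
          mul_le_mul_of_nonneg_left hfsM (sq_nonneg ‖φ t - φ s‖)]
      calc ‖φ t • f t - φ s • f s‖ ^ 2 / (t - s) ^ p
          ≤ ((2 * Hf ^ 2 * ‖φ t‖ ^ 2) * (t - s) ^ (2 * α)
              + (2 * Mf ^ 2) * ‖φ t - φ s‖ ^ 2) / (t - s) ^ p := by gcongr
        _ = (2 * Hf ^ 2 * ‖φ t‖ ^ 2) * (t - s) ^ (γ - 1)
              + 2 * Mf ^ 2 * (‖φ t - φ s‖ ^ 2 / (t - s) ^ p) := by
            rw [add_div, mul_div_assoc, mul_div_assoc, e1]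
    calc ENNReal.ofReal (‖φ t • f t - φ s • f s‖ ^ 2 / (t - s) ^ p)
        ≤ ENNReal.ofReal ((2 * Hf ^ 2 * ‖φ t‖ ^ 2) * (t - s) ^ (γ - 1)
            + 2 * Mf ^ 2 * (‖φ t - φ s‖ ^ 2 / (t - s) ^ p)) :=
          ENNReal.ofReal_le_ofReal hreal
      _ ≤ ENNReal.ofReal ((2 * Hf ^ 2 * ‖φ t‖ ^ 2) * (t - s) ^ (γ - 1))
            + ENNReal.ofReal (2 * Mf ^ 2 * (‖φ t - φ s‖ ^ 2 / (t - s) ^ p)) :=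
          ENNReal.ofReal_add_le
      _ = ENNReal.ofReal ((2 * Hf ^ 2 * ‖φ t‖ ^ 2) * (t - s) ^ (γ - 1))
            + ENNReal.ofReal (2 * Mf ^ 2) *
                ENNReal.ofReal (‖φ t - φ s‖ ^ 2 / (t - s) ^ p) := by
          congr 1
          exact ENNReal.ofReal_mul (by positivity)
  -- inner integral bound
  have hinner : ∀ t ∈ Ioo (0:ℝ) T,
      ∫⁻ s in Ioo (0:ℝ) t,
        ENNReal.ofReal (‖φ t • f t - φ s • f s‖ ^ 2 / (t - s) ^ p)
      ≤ ENNReal.ofReal (2 * Hf ^ 2 * ‖φ t‖ ^ 2) * ENNReal.ofReal C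
        + ENNReal.ofReal (2 * Mf ^ 2) *
            ∫⁻ s in Ioo (0:ℝ) t, ENNReal.ofReal (‖φ t - φ s‖ ^ 2 / (t - s) ^ p) := by
    intro t ht
    have ht0 : 0 < t := ht.1
    have hmeas : Measurable fun s =>
        ENNReal.ofReal ((2 * Hf ^ 2 * ‖φ t‖ ^ 2) * (t - s) ^ (γ - 1)) := by
      fun_prop
    have hnn : 0 ≤ᵐ[volume.restrict (Ioo (0:ℝ) t)] fun s => (t - s) ^ (γ - 1) := by
      refine (ae_restrict_iff' measurableSet_Ioo).2 (ae_of_all _ fun s hs => ?_)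
      have : 0 < t - s := by linarith [hs.2]
      positivity
    have hIone : ∫⁻ s in Ioo (0:ℝ) t, ENNReal.ofReal ((t - s) ^ (γ - 1))
        = ENNReal.ofReal (t ^ γ / γ) := by
      rw [← ofReal_integral_eq_lintegral_ofReal
        (aux_integrableOn t (γ - 1) ht0 (by linarith)) hnn,
        aux_integral_eq t (γ - 1) ht0 (by linarith), sub_add_cancel]
    calc ∫⁻ s in Ioo (0:ℝ) t,
          ENNReal.ofReal (‖φ t • f t - φ s • f s‖ ^ 2 / (t - s) ^ p)
        ≤ ∫⁻ s in Ioo (0:ℝ) t,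
            (ENNReal.ofReal ((2 * Hf ^ 2 * ‖φ t‖ ^ 2) * (t - s) ^ (γ - 1))
              + ENNReal.ofReal (2 * Mf ^ 2) *
                  ENNReal.ofReal (‖φ t - φ s‖ ^ 2 / (t - s) ^ p)) :=
          setLIntegral_mono' measurableSet_Ioo (hpt t ht)
      _ = (∫⁻ s in Ioo (0:ℝ) t,
            ENNReal.ofReal ((2 * Hf ^ 2 * ‖φ t‖ ^ 2) * (t - s) ^ (γ - 1)))
          + ∫⁻ s in Ioo (0:ℝ) t,
              ENNReal.ofReal (2 * Mf ^ 2) *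
                ENNReal.ofReal (‖φ t - φ s‖ ^ 2 / (t - s) ^ p) :=
          lintegral_add_left hmeas _
      _ = ENNReal.ofReal (2 * Hf ^ 2 * ‖φ t‖ ^ 2) *
            (∫⁻ s in Ioo (0:ℝ) t, ENNReal.ofReal ((t - s) ^ (γ - 1)))
          + ENNReal.ofReal (2 * Mf ^ 2) *
              ∫⁻ s in Ioo (0:ℝ) t, ENNReal.ofReal (‖φ t - φ s‖ ^ 2 / (t - s) ^ p) := by
          rw [lintegral_const_mul' _ _ ENNReal.ofReal_ne_top]
          congr 1
          rw [← lintegral_const_mul' _ _ ENNReal.ofReal_ne_top]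
          refine lintegral_congr fun s => ?_
          rw [← ENNReal.ofReal_mul (by positivity)]
      _ ≤ ENNReal.ofReal (2 * Hf ^ 2 * ‖φ t‖ ^ 2) * ENNReal.ofReal C
          + ENNReal.ofReal (2 * Mf ^ 2) *
              ∫⁻ s in Ioo (0:ℝ) t, ENNReal.ofReal (‖φ t - φ s‖ ^ 2 / (t - s) ^ p) := by
          gcongr
          rw [hIone, hCdef]
          apply ENNReal.ofReal_le_ofReal
          gcongr
          all_goals first | exact ht.2.le | exact ht0.le
  -- main estimate
  have hmain : ∫⁻ t in Ioo (0:ℝ) T, ∫⁻ s in Ioo (0:ℝ) t,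
        ENNReal.ofReal (‖φ t • f t - φ s • f s‖ ^ 2 / (t - s) ^ p)
      ≤ 2 * (ENNReal.ofReal (C * Hf ^ 2 * I) + ENNReal.ofReal (Mf ^ 2) * G) := by
    have haem : AEMeasurable
        (fun t => ENNReal.ofReal (2 * Hf ^ 2 * ‖φ t‖ ^ 2) * ENNReal.ofReal C)
        (volume.restrict (Ioo (0:ℝ) T)) := by
      exact ((hφ2.aemeasurable.const_mul (2 * Hf ^ 2)).ennreal_ofReal).mul_const _
    calc ∫⁻ t in Ioo (0:ℝ) T, ∫⁻ s in Ioo (0:ℝ) t,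
          ENNReal.ofReal (‖φ t • f t - φ s • f s‖ ^ 2 / (t - s) ^ p)
        ≤ ∫⁻ t in Ioo (0:ℝ) T,
            (ENNReal.ofReal (2 * Hf ^ 2 * ‖φ t‖ ^ 2) * ENNReal.ofReal C
              + ENNReal.ofReal (2 * Mf ^ 2) *
                  ∫⁻ s in Ioo (0:ℝ) t, ENNReal.ofReal (‖φ t - φ s‖ ^ 2 / (t - s) ^ p)) :=
          setLIntegral_mono' measurableSet_Ioo hinner
      _ = (∫⁻ t in Ioo (0:ℝ) T,
            ENNReal.ofReal (2 * Hf ^ 2 * ‖φ t‖ ^ 2) * ENNReal.ofReal C)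
          + ENNReal.ofReal (2 * Mf ^ 2) * G := by
          rw [lintegral_add_left' haem, hGdef,
            lintegral_const_mul' _ _ ENNReal.ofReal_ne_top]
      _ = (ENNReal.ofReal (2 * Hf ^ 2) * ENNReal.ofReal C) * ENNReal.ofReal I
          + ENNReal.ofReal (2 * Mf ^ 2) * G := by
          congr 1
          calc ∫⁻ t in Ioo (0:ℝ) T,
                ENNReal.ofReal (2 * Hf ^ 2 * ‖φ t‖ ^ 2) * ENNReal.ofReal C
              = ∫⁻ t in Ioo (0:ℝ) T,
                  (ENNReal.ofReal (2 * Hf ^ 2) * ENNReal.ofReal C) *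
                    ENNReal.ofReal (‖φ t‖ ^ 2) := by
                refine lintegral_congr fun t => ?_
                rw [ENNReal.ofReal_mul (show (0:ℝ) ≤ 2 * Hf ^ 2 by positivity)]
                ring
            _ = (ENNReal.ofReal (2 * Hf ^ 2) * ENNReal.ofReal C) *
                  ∫⁻ t in Ioo (0:ℝ) T, ENNReal.ofReal (‖φ t‖ ^ 2) :=
                lintegral_const_mul' _ _
                  (ENNReal.mul_ne_top ENNReal.ofReal_ne_top ENNReal.ofReal_ne_top)
            _ = (ENNReal.ofReal (2 * Hf ^ 2) * ENNReal.ofReal C) * ENNReal.ofReal I := by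
                rw [hIdef, ofReal_integral_eq_lintegral_ofReal hφ2
                  (ae_of_all _ fun t => sq_nonneg _)]
      _ = 2 * (ENNReal.ofReal (C * Hf ^ 2 * I) + ENNReal.ofReal (Mf ^ 2) * G) := by
          have hHf2 : ENNReal.ofReal (2 * Hf ^ 2) = 2 * ENNReal.ofReal (Hf ^ 2) := by
            rw [ENNReal.ofReal_mul (by norm_num : (0:ℝ) ≤ 2)]
            norm_num
          have hMf2 : ENNReal.ofReal (2 * Mf ^ 2) = 2 * ENNReal.ofReal (Mf ^ 2) := by
            rw [ENNReal.ofReal_mul (by norm_num : (0:ℝ) ≤ 2)]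
            norm_num
          rw [mul_add]
          congr 1
          · rw [hHf2]
            have : ENNReal.ofReal (C * Hf ^ 2 * I)
                = ENNReal.ofReal (Hf ^ 2) * ENNReal.ofReal C * ENNReal.ofReal I := by
              rw [← ENNReal.ofReal_mul (by positivity),
                ← ENNReal.ofReal_mul (by positivity)]
              congr 1
              ring
            rw [this]
            ring
          · rw [hMf2, mul_assoc]
  refine ⟨?_, hmain⟩
  have hfin : 2 * (ENNReal.ofReal (C * Hf ^ 2 * I) + ENNReal.ofReal (Mf ^ 2) * G) ≠ ⊤ := by
    apply ENNReal.mul_ne_top (by norm_num)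
    exact ENNReal.add_ne_top.2 ⟨ENNReal.ofReal_ne_top,
      ENNReal.mul_ne_top ENNReal.ofReal_ne_top hφG⟩
  exact ne_top_of_le_ne_top hfin hmain
end

section
/- Let $V$ be a Hilbert space, $\beta \in (1/2, 1)$ and $f \in H^\beta(0,T;V)$ (i.e., $f$ continuous on $[0,T]$ with finite Gagliardo seminorm of order $\beta$). Then there exists a constant $C > 0$, depending only on $\beta$ (in particular independent of $T$ and $f$), such that $\|f\|_{L^2(0,T;V)}^2 \le C\,T\,\Big(\|f(0)\|_V^2 + T^{2\beta-1}\int_0^T \int_0^t \frac{\|f(t)-f(s)\|_V^2}{(t-s)^{1+2\beta}}\,ds\,dt\Big)$. -/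
open MeasureTheory Set
open scoped ENNReal

namespace L2BoundAux

noncomputable section

variable {V : Type*} [NormedAddCommGroup V]

lemma three_sq (x y z : ℝ) : (x + y + z) ^ 2 ≤ 3 * x ^ 2 + 3 * y ^ 2 + 3 * z ^ 2 := by
  nlinarith [sq_nonneg (x - y), sq_nonneg (y - z), sq_nonneg (x - z)]

lemma ofReal_integral_le {α : Type*} [MeasurableSpace α] {μ : Measure α} {g : α → ℝ}
    (hg : Integrable g μ) :
    ENNReal.ofReal (∫ x, g x ∂μ) ≤ ∫⁻ x, ENNReal.ofReal (g x) ∂μ := by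
  calc ENNReal.ofReal (∫ x, g x ∂μ)
      ≤ ENNReal.ofReal (∫ x, max (g x) 0 ∂μ) := by
        apply ENNReal.ofReal_le_ofReal
        exact integral_mono hg hg.pos_part (fun x => le_max_left _ _)
    _ = ∫⁻ x, ENNReal.ofReal (max (g x) 0) ∂μ :=
        ofReal_integral_eq_lintegral_ofReal hg.pos_part (ae_of_all _ fun x => le_max_right _ _)
    _ = ∫⁻ x, ENNReal.ofReal (g x) ∂μ := by
        refine lintegral_congr fun x => ?_
        rcases le_total 0 (g x) with h | h
        · rw [max_eq_left h]
        · rw [max_eq_right h, ENNReal.ofReal_of_nonpos h, ENNReal.ofReal_zero]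

lemma lintegral_le_sqrt {α : Type*} [MeasurableSpace α] (μ : Measure α) {G : α → ℝ≥0∞}
    (hG : AEMeasurable G μ) :
    ∫⁻ x, G x ∂μ ≤ (∫⁻ x, (G x) ^ (2:ℝ) ∂μ) ^ ((1:ℝ)/2) * (μ univ) ^ ((1:ℝ)/2) := by
  have hpq : Real.HolderConjugate 2 2 := Real.HolderConjugate.two_two
  have h := ENNReal.lintegral_mul_le_Lp_mul_Lq μ hpq hG
    (aemeasurable_const (b := (1:ℝ≥0∞)))
  simpa using h

/-- the symmetric integrand -/
def Fu (β : ℝ) (f : ℝ → V) : ℝ × ℝ → ℝ≥0∞ := fun p =>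
  ENNReal.ofReal (‖f p.1 - f p.2‖ ^ 2 / |p.1 - p.2| ^ (1 + 2 * β))

def Reg (T : ℝ) : Set (ℝ × ℝ) := {p | 0 < p.2 ∧ p.2 < p.1 ∧ p.1 < T}

/-- the double integral as a product-measure integral -/
def Dpr (β : ℝ) (T : ℝ) (f : ℝ → V) : ℝ≥0∞ :=
  ∫⁻ p in Reg T, Fu β f p ∂(volume.prod volume)

lemma Fu_swap (β : ℝ) (f : ℝ → V) (p : ℝ × ℝ) : Fu β f p.swap = Fu β f p := by
  unfold Fu
  simp only [Prod.fst_swap, Prod.snd_swap]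
  rw [norm_sub_rev, abs_sub_comm]

lemma isOpen_Reg (T : ℝ) : IsOpen (Reg T) := by
  have h1 : IsOpen {p : ℝ × ℝ | 0 < p.2} := isOpen_lt continuous_const continuous_snd
  have h2 : IsOpen {p : ℝ × ℝ | p.2 < p.1} := isOpen_lt continuous_snd continuous_fst
  have h3 : IsOpen {p : ℝ × ℝ | p.1 < T} := isOpen_lt continuous_fst continuous_const
  have : Reg T = {p : ℝ × ℝ | 0 < p.2} ∩ ({p : ℝ × ℝ | p.2 < p.1} ∩ {p : ℝ × ℝ | p.1 < T}) := by
    ext p; simp [Reg, and_assoc]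
  rw [this]
  exact h1.inter (h2.inter h3)

variable {β T : ℝ} {f : ℝ → V}

lemma aesm_sub (hf : ContinuousOn f (Icc 0 T)) :
    AEStronglyMeasurable (fun p : ℝ × ℝ => f p.1 - f p.2)
      ((volume.prod volume).restrict (Ioo 0 T ×ˢ Ioo 0 T)) := by
  have h1 : ContinuousOn (fun p : ℝ × ℝ => f p.1 - f p.2) (Ioo 0 T ×ˢ Ioo 0 T) := by
    apply ContinuousOn.sub
    · exact (hf.mono Ioo_subset_Icc_self).comp continuous_fst.continuousOn fun p hp => hp.1
    · exact (hf.mono Ioo_subset_Icc_self).comp continuous_snd.continuousOn fun p hp => hp.2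
  exact h1.aestronglyMeasurable (measurableSet_Ioo.prod measurableSet_Ioo)

lemma aemeas_norm (hf : ContinuousOn f (Icc 0 T)) :
    AEMeasurable (fun p : ℝ × ℝ => ENNReal.ofReal ‖f p.1 - f p.2‖)
      ((volume.prod volume).restrict (Ioo 0 T ×ˢ Ioo 0 T)) :=
  ((aesm_sub hf).norm.aemeasurable).ennreal_ofReal

lemma aemeas_Fu (hf : ContinuousOn f (Icc 0 T)) :
    AEMeasurable (Fu β f) ((volume.prod volume).restrict (Ioo 0 T ×ˢ Ioo 0 T)) := by
  have hnum : AEMeasurable (fun p : ℝ × ℝ => ‖f p.1 - f p.2‖ ^ 2)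
      ((volume.prod volume).restrict (Ioo 0 T ×ˢ Ioo 0 T)) :=
    ((aesm_sub hf).norm.aemeasurable).pow_const 2
  have hden : Measurable (fun p : ℝ × ℝ => |p.1 - p.2| ^ (1 + 2 * β)) :=
    (measurable_fst.sub measurable_snd).abs.pow measurable_const
  exact (hnum.div hden.aemeasurable).ennreal_ofReal

lemma diter_eq (hf : ContinuousOn f (Icc 0 T)) :
    (∫⁻ t in Ioo (0:ℝ) T, ∫⁻ s in Ioo (0:ℝ) t,
        ENNReal.ofReal (‖f t - f s‖ ^ 2 / (t - s) ^ (1 + 2 * β))) = Dpr β T f := by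
  have hRegM : MeasurableSet (Reg T) := (isOpen_Reg T).measurableSet
  have hsub : Reg T ⊆ Ioo 0 T ×ˢ Ioo 0 T := fun p hp =>
    ⟨⟨hp.1.trans hp.2.1, hp.2.2⟩, ⟨hp.1, hp.2.1.trans hp.2.2⟩⟩
  have hFu : AEMeasurable (Fu β f) ((volume.prod volume).restrict (Reg T)) :=
    (aemeas_Fu hf).mono_measure (Measure.restrict_mono hsub le_rfl)
  have hind : AEMeasurable ((Reg T).indicator (Fu β f)) (volume.prod volume) :=
    (aemeasurable_indicator_iff hRegM).mpr hFu
  rw [Dpr, ← lintegral_indicator hRegM, lintegral_prod _ hind]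
  conv_lhs => rw [← lintegral_indicator (measurableSet_Ioo (a := (0:ℝ)) (b := T))]
  refine lintegral_congr fun t => ?_
  by_cases ht : t ∈ Ioo (0:ℝ) T
  · rw [indicator_of_mem ht, ← lintegral_indicator (measurableSet_Ioo (a := (0:ℝ)) (b := t))]
    refine lintegral_congr fun s => ?_
    by_cases hs : s ∈ Ioo 0 t
    · rw [indicator_of_mem hs, indicator_of_mem (show ((t,s) : ℝ × ℝ) ∈ Reg T from
        ⟨hs.1, hs.2, ht.2⟩)]
      unfold Fu
      simp only
      rw [abs_of_pos (sub_pos.2 hs.2)]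
    · rw [indicator_of_notMem hs,
        indicator_of_notMem (fun hmem : ((t,s) : ℝ × ℝ) ∈ Reg T => hs ⟨hmem.1, hmem.2.1⟩)]
  · rw [indicator_of_notMem ht]
    have hz : ∀ s, (Reg T).indicator (Fu β f) (t, s) = 0 := fun s =>
      indicator_of_notMem
        (fun hmem : ((t,s) : ℝ × ℝ) ∈ Reg T => ht ⟨hmem.1.trans hmem.2.1, hmem.2.2⟩) _
    simp [hz]

lemma square_le (hf : ContinuousOn f (Icc 0 T)) {a : ℝ} (ha : 0 < a) (haT : a ≤ T) :
    ∫⁻ p in Ioo 0 a ×ˢ Ioo 0 a, Fu β f p ∂(volume.prod volume) ≤ 2 * Dpr β T f := by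
  set Q : Set (ℝ × ℝ) := Ioo (0:ℝ) a ×ˢ Ioo (0:ℝ) a with hQ
  have hQm : MeasurableSet Q := measurableSet_Ioo.prod measurableSet_Ioo
  have hAm : MeasurableSet {p : ℝ × ℝ | p.2 < p.1} :=
    (isOpen_lt continuous_snd continuous_fst).measurableSet
  rw [← lintegral_inter_add_diff (μ := volume.prod volume) (Fu β f) Q hAm]
  have h1 : ∫⁻ p in Q ∩ {p : ℝ × ℝ | p.2 < p.1}, Fu β f p ∂(volume.prod volume) ≤ Dpr β T f := by
    apply lintegral_mono_set
    rintro p ⟨⟨h1, h2⟩, h3⟩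
    exact ⟨h2.1, h3, lt_of_lt_of_le h1.2 haT⟩
  -- swap the lower triangle
  have key : ∀ s : Set (ℝ × ℝ), MeasurableSet s →
      ∫⁻ p in s, Fu β f p ∂(volume.prod volume) =
      ∫⁻ p in Prod.swap ⁻¹' s, Fu β f p ∂(volume.prod volume) := by
    intro s hs
    rw [← lintegral_indicator hs, ← lintegral_indicator (measurable_swap hs)]
    calc ∫⁻ p, s.indicator (Fu β f) p ∂(volume.prod volume)
        = ∫⁻ p, (Prod.swap ⁻¹' s).indicator (Fu β f) (Prod.swap p) ∂(volume.prod volume) := by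
          refine lintegral_congr fun p => ?_
          by_cases h : p ∈ s
          · rw [indicator_of_mem h, indicator_of_mem (by simpa using h), Fu_swap]
          · rw [indicator_of_notMem h, indicator_of_notMem (by simpa using h)]
      _ = ∫⁻ p, (Prod.swap ⁻¹' s).indicator (Fu β f) p ∂(volume.prod volume) :=
          lintegral_prod_swap _
  have hswap : Prod.swap ⁻¹' (Q \ {p : ℝ × ℝ | p.2 < p.1}) =
      Q ∩ {p : ℝ × ℝ | p.2 ≤ p.1} := by
    ext p
    simp only [mem_preimage, mem_diff, mem_inter_iff, mem_setOf_eq, Prod.fst_swap, Prod.snd_swap,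
      hQ, mem_prod, Prod.fst_swap, Prod.snd_swap, not_lt]
    tauto
  have h2 : ∫⁻ p in Q \ {p : ℝ × ℝ | p.2 < p.1}, Fu β f p ∂(volume.prod volume) ≤ Dpr β T f := by
    rw [key _ (hQm.diff hAm), hswap]
    have hsub2 : Q ∩ {p : ℝ × ℝ | p.2 ≤ p.1} ⊆
        (Q ∩ {p : ℝ × ℝ | p.2 < p.1}) ∪ {p : ℝ × ℝ | p.1 = p.2} := by
      rintro p ⟨hpQ, hple⟩
      rcases lt_or_eq_of_le (show p.2 ≤ p.1 from hple) with h | h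
      · exact Or.inl ⟨hpQ, h⟩
      · exact Or.inr h.symm
    calc ∫⁻ p in Q ∩ {p : ℝ × ℝ | p.2 ≤ p.1}, Fu β f p ∂(volume.prod volume)
        ≤ ∫⁻ p in (Q ∩ {p : ℝ × ℝ | p.2 < p.1}) ∪ {p : ℝ × ℝ | p.1 = p.2},
            Fu β f p ∂(volume.prod volume) := lintegral_mono_set hsub2
      _ ≤ (∫⁻ p in Q ∩ {p : ℝ × ℝ | p.2 < p.1}, Fu β f p ∂(volume.prod volume)) +
          ∫⁻ p in {p : ℝ × ℝ | p.1 = p.2}, Fu β f p ∂(volume.prod volume) :=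
            lintegral_union_le _ _ _
      _ ≤ Dpr β T f + 0 := by
          refine add_le_add h1 ?_
          have hdm : MeasurableSet {p : ℝ × ℝ | p.1 = p.2} :=
            (isClosed_eq continuous_fst continuous_snd).measurableSet
          have : ∀ᵐ p ∂((volume.prod volume).restrict {p : ℝ × ℝ | p.1 = p.2}),
              Fu β f p ≤ 0 := by
            filter_upwards [self_mem_ae_restrict hdm] with p hp
            have : f p.1 - f p.2 = 0 := by rw [show p.1 = p.2 from hp, sub_self]
            simp [Fu, this]
          simpa using lintegral_mono_ae this
      _ = Dpr β T f := add_zero _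
  calc (∫⁻ p in Q ∩ {p : ℝ × ℝ | p.2 < p.1}, Fu β f p ∂(volume.prod volume)) +
        ∫⁻ p in Q \ {p : ℝ × ℝ | p.2 < p.1}, Fu β f p ∂(volume.prod volume)
      ≤ Dpr β T f + Dpr β T f := add_le_add h1 h2
    _ = 2 * Dpr β T f := (two_mul _).symm

lemma phi_intOn (hf : ContinuousOn f (Icc 0 T)) {c : ℝ} (hc : c ≤ T) :
    IntegrableOn (fun u => ‖f u - f 0‖) (Ioo 0 c) volume := by
  have h1 : ContinuousOn (fun u => ‖f u - f 0‖) (Icc 0 T) := (hf.sub continuousOn_const).norm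
  exact ((h1.mono (Icc_subset_Icc le_rfl hc)).integrableOn_Icc).mono_set Ioo_subset_Icc_self

lemma dist_intOn (hf : ContinuousOn f (Icc 0 T)) (u : ℝ) {c : ℝ} (hc : c ≤ T) :
    IntegrableOn (fun v => ‖f u - f v‖) (Ioo 0 c) volume := by
  have h1 : ContinuousOn (fun v => ‖f u - f v‖) (Icc 0 T) := (continuousOn_const.sub hf).norm
  exact ((h1.mono (Icc_subset_Icc le_rfl hc)).integrableOn_Icc).mono_set Ioo_subset_Icc_self

lemma const_intOn {c b : ℝ} : IntegrableOn (fun _ : ℝ => b) (Ioo 0 c) volume :=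
  integrableOn_const (by rw [Real.volume_Ioo]; exact ENNReal.ofReal_ne_top)

lemma phi_sub_le (f : ℝ → V) (u v : ℝ) : ‖f u - f 0‖ - ‖f v - f 0‖ ≤ ‖f u - f v‖ := by
  have := norm_sub_norm_le (f u - f 0) (f v - f 0)
  rwa [sub_sub_sub_cancel_right] at this

lemma step (hβ0 : 1/2 < β) (hT : 0 < T) (hf : ContinuousOn f (Icc 0 T))
    (hD : Dpr β T f ≠ ⊤) {a : ℝ} (ha : 0 < a) (haT : a ≤ T) :
    a⁻¹ * ∫ u in Ioo 0 a, ‖f u - f 0‖ ≤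
      (a/2)⁻¹ * (∫ u in Ioo 0 (a/2), ‖f u - f 0‖) +
        2 * a ^ (β - 1/2) * Real.sqrt (Dpr β T f).toReal := by
  set φ : ℝ → ℝ := fun u => ‖f u - f 0‖ with hφ
  set h : ℝ := a / 2 with hh
  have hh0 : 0 < h := by positivity
  have hhT : h ≤ T := le_trans (by linarith) haT
  set c : ℝ := ∫ v in Ioo 0 h, φ v with hc
  set DR : ℝ := (Dpr β T f).toReal with hDR
  have hDR0 : 0 ≤ DR := ENNReal.toReal_nonneg
  have hDpr : Dpr β T f = ENNReal.ofReal DR := (ENNReal.ofReal_toReal hD).symm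
  set M : ℝ := 2 * a ^ (β - 1/2) * Real.sqrt DR with hM
  have hM0 : 0 ≤ M := by positivity
  -- pointwise identity : h * φ u - c = ∫ v in Ioo 0 h, (φ u - φ v)
  have hptid : ∀ u : ℝ, ∫ v in Ioo 0 h, (φ u - φ v) = h * φ u - c := by
    intro u
    rw [integral_sub const_intOn (phi_intOn hf hhT), setIntegral_const]
    rw [measureReal_def, Real.volume_Ioo, sub_zero, ENNReal.toReal_ofReal hh0.le, smul_eq_mul]
  -- main ENNReal estimate
  have hmain : ENNReal.ofReal (∫ u in Ioo 0 a, (h * φ u - c)) ≤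
      ENNReal.ofReal (a * h * M) := by
    have hint : IntegrableOn (fun u => h * φ u - c) (Ioo 0 a) volume :=
      ((phi_intOn hf haT).const_mul h).sub const_intOn
    refine le_trans (ofReal_integral_le hint) ?_
    have hstep2 : (∫⁻ u in Ioo 0 a, ENNReal.ofReal (h * φ u - c)) ≤
        ∫⁻ u in Ioo 0 a, ∫⁻ v in Ioo 0 h, ENNReal.ofReal ‖f u - f v‖ := by
      refine lintegral_mono fun u => ?_
      rw [← hptid u]
      refine le_trans (ofReal_integral_le (const_intOn.sub (phi_intOn hf hhT))) ?_
      exact lintegral_mono fun v => ENNReal.ofReal_le_ofReal (phi_sub_le f u v)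
    refine le_trans hstep2 ?_
    -- product / Hölder
    set π : Measure (ℝ × ℝ) := (volume.restrict (Ioo 0 a)).prod (volume.restrict (Ioo 0 h))
      with hπ
    have hππ : π = (volume.prod volume).restrict (Ioo 0 a ×ˢ Ioo 0 h) :=
      Measure.prod_restrict _ _
    have hsubsq : (Ioo (0:ℝ) a ×ˢ Ioo (0:ℝ) h) ⊆ Ioo 0 T ×ˢ Ioo 0 T :=
      prod_mono (Ioo_subset_Ioo le_rfl haT) (Ioo_subset_Ioo le_rfl hhT)
    have hGm : AEMeasurable (fun p : ℝ × ℝ => ENNReal.ofReal ‖f p.1 - f p.2‖) π := by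
      rw [hππ]
      exact (aemeas_norm hf).mono_measure (Measure.restrict_mono hsubsq le_rfl)
    have hiter : (∫⁻ u in Ioo 0 a, ∫⁻ v in Ioo 0 h, ENNReal.ofReal ‖f u - f v‖) =
        ∫⁻ z, ENNReal.ofReal ‖f z.1 - f z.2‖ ∂π := (lintegral_prod _ hGm).symm
    rw [hiter]
    refine le_trans (lintegral_le_sqrt π hGm) ?_
    have huniv : π univ = ENNReal.ofReal a * ENNReal.ofReal h := by
      rw [hπ, ← univ_prod_univ, Measure.prod_prod, Measure.restrict_apply_univ,
        Measure.restrict_apply_univ, Real.volume_Ioo, Real.volume_Ioo, sub_zero, sub_zero]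
    have hsq : (∫⁻ z, (ENNReal.ofReal ‖f z.1 - f z.2‖) ^ (2:ℝ) ∂π) ≤
        ENNReal.ofReal (a ^ (1 + 2*β)) * (2 * Dpr β T f) := by
      have hb : ∀ᵐ z ∂π, (ENNReal.ofReal ‖f z.1 - f z.2‖) ^ (2:ℝ) ≤
          ENNReal.ofReal (a ^ (1 + 2*β)) * Fu β f z := by
        rw [hππ]
        filter_upwards [self_mem_ae_restrict (measurableSet_Ioo.prod measurableSet_Ioo)]
          with z hz
        obtain ⟨hz1, hz2⟩ := hz
        have h2 : (ENNReal.ofReal ‖f z.1 - f z.2‖) ^ (2:ℝ) =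
            ENNReal.ofReal (‖f z.1 - f z.2‖ ^ 2) := by
          rw [show (2:ℝ) = ((2:ℕ):ℝ) by norm_num, ENNReal.rpow_natCast,
            ← ENNReal.ofReal_pow (norm_nonneg _)]
        rw [h2]
        simp only [Fu]
        rw [← ENNReal.ofReal_mul (by positivity)]
        apply ENNReal.ofReal_le_ofReal
        by_cases hzz : z.1 = z.2
        · rw [hzz, sub_self, norm_zero]
          have : (0:ℝ)^2 = 0 := by norm_num
          rw [this]
          positivity
        · have habs : 0 < |z.1 - z.2| := abs_pos.2 (sub_ne_zero.2 hzz)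
          have habs2 : |z.1 - z.2| ≤ a := by
            rw [abs_le]
            constructor
            · have := hz1.1; have := hz2.2; have : z.2 < a := lt_of_lt_of_le hz2.2 (by linarith)
              linarith [hz1.1]
            · linarith [hz1.2, hz2.1]
          have hpow : |z.1 - z.2| ^ (1 + 2*β) ≤ a ^ (1 + 2*β) :=
            Real.rpow_le_rpow (abs_nonneg _) habs2 (by linarith)
          have hpowpos : 0 < |z.1 - z.2| ^ (1 + 2*β) := Real.rpow_pos_of_pos habs _
          calc ‖f z.1 - f z.2‖ ^ 2
              = ‖f z.1 - f z.2‖ ^ 2 / |z.1 - z.2| ^ (1 + 2*β) * |z.1 - z.2| ^ (1 + 2*β) :=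
                (div_mul_cancel₀ _ hpowpos.ne').symm
            _ ≤ ‖f z.1 - f z.2‖ ^ 2 / |z.1 - z.2| ^ (1 + 2*β) * a ^ (1 + 2*β) :=
                mul_le_mul_of_nonneg_left hpow (by positivity)
            _ = a ^ (1 + 2*β) * (‖f z.1 - f z.2‖ ^ 2 / |z.1 - z.2| ^ (1 + 2*β)) := mul_comm _ _
      calc ∫⁻ z, (ENNReal.ofReal ‖f z.1 - f z.2‖) ^ (2:ℝ) ∂π
          ≤ ∫⁻ z, ENNReal.ofReal (a ^ (1 + 2*β)) * Fu β f z ∂π := lintegral_mono_ae hb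
        _ = ENNReal.ofReal (a ^ (1 + 2*β)) * ∫⁻ z, Fu β f z ∂π :=
            lintegral_const_mul' _ _ ENNReal.ofReal_ne_top
        _ ≤ ENNReal.ofReal (a ^ (1 + 2*β)) * (2 * Dpr β T f) := by
            refine mul_le_mul_right ?_ _
            rw [hππ]
            refine le_trans (lintegral_mono_set (prod_mono (subset_refl (Ioo (0:ℝ) a))
              (Ioo_subset_Ioo (le_refl (0:ℝ)) (show h ≤ a by rw [hh]; linarith)))) ?_
            exact square_le hf ha haT
    calc (∫⁻ z, (ENNReal.ofReal ‖f z.1 - f z.2‖) ^ (2:ℝ) ∂π) ^ ((1:ℝ)/2) * (π univ) ^ ((1:ℝ)/2)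
        ≤ (ENNReal.ofReal (a ^ (1 + 2*β)) * (2 * Dpr β T f)) ^ ((1:ℝ)/2) *
            (ENNReal.ofReal a * ENNReal.ofReal h) ^ ((1:ℝ)/2) := by
          rw [huniv]
          exact mul_le_mul_left (ENNReal.rpow_le_rpow hsq (by norm_num)) _
      _ ≤ ENNReal.ofReal (a * h * M) := by
          rw [hDpr]
          rw [show (2 : ℝ≥0∞) * ENNReal.ofReal DR = ENNReal.ofReal (2 * DR) by
            rw [ENNReal.ofReal_mul (by norm_num), ENNReal.ofReal_ofNat]]
          rw [← ENNReal.ofReal_mul (by positivity), ← ENNReal.ofReal_mul ha.le,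
            ENNReal.ofReal_rpow_of_nonneg (by positivity) (by norm_num),
            ENNReal.ofReal_rpow_of_nonneg (by positivity) (by norm_num),
            ← ENNReal.ofReal_mul (by positivity)]
          apply ENNReal.ofReal_le_ofReal
          -- real inequality
          have hL0 : (0:ℝ) ≤ (a ^ (1 + 2*β) * (2 * DR)) ^ ((1:ℝ)/2) * (a * h) ^ ((1:ℝ)/2) := by
            positivity
          have hR0 : (0:ℝ) ≤ a * h * M := by positivity
          refine le_of_pow_le_pow_left₀ two_ne_zero hR0 (le_of_eq ?_)
          have hsq1 : ((a ^ (1 + 2*β) * (2 * DR)) ^ ((1:ℝ)/2)) ^ (2:ℕ) =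
              a ^ (1 + 2*β) * (2 * DR) := by
            rw [← Real.rpow_natCast ((a ^ (1 + 2*β) * (2 * DR)) ^ ((1:ℝ)/2)) 2,
              ← Real.rpow_mul (by positivity)]
            norm_num
          have hsq2 : ((a * h) ^ ((1:ℝ)/2)) ^ (2:ℕ) = a * h := by
            rw [← Real.rpow_natCast ((a * h) ^ ((1:ℝ)/2)) 2, ← Real.rpow_mul (by positivity)]
            norm_num
          have hsq3 : (a ^ (β - 1/2)) ^ (2:ℕ) = a ^ (2*β - 1) := by
            rw [← Real.rpow_natCast (a ^ (β - 1/2)) 2, ← Real.rpow_mul ha.le]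
            congr 1
            ring
          have hsq4 : (Real.sqrt DR) ^ (2:ℕ) = DR := Real.sq_sqrt hDR0
          have hsq5 : a ^ (1 + 2*β) = a ^ (2*β - 1) * a ^ (2:ℕ) := by
            rw [← Real.rpow_natCast a 2, ← Real.rpow_add ha]
            congr 1
            ring
          calc ((a ^ (1 + 2*β) * (2 * DR)) ^ ((1:ℝ)/2) * (a * h) ^ ((1:ℝ)/2)) ^ (2:ℕ)
              = ((a ^ (1 + 2*β) * (2 * DR)) ^ ((1:ℝ)/2)) ^ (2:ℕ) *
                ((a * h) ^ ((1:ℝ)/2)) ^ (2:ℕ) := by ring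
            _ = a ^ (1 + 2*β) * (2 * DR) * (a * h) := by rw [hsq1, hsq2]
            _ = (a ^ (2*β - 1) * DR) * (a^(2:ℕ) * a^(2:ℕ)) := by rw [hsq5, hh]; ring
            _ = (a * h * M) ^ (2:ℕ) := by
                rw [hM, hh]
                rw [show (a * (a/2) * (2 * a ^ (β - 1/2) * Real.sqrt DR)) ^ (2:ℕ) =
                  (a ^ (β - 1/2)) ^ (2:ℕ) * (Real.sqrt DR) ^ (2:ℕ) *
                    (a ^ (2:ℕ) * a ^ (2:ℕ)) by ring]
                rw [hsq3, hsq4]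
  -- conclude in the reals
  have hreal : ∫ u in Ioo 0 a, (h * φ u - c) ≤ a * h * M :=
    (ENNReal.ofReal_le_ofReal_iff (by positivity)).mp hmain
  have hcompute : ∫ u in Ioo 0 a, (h * φ u - c) =
      h * (∫ u in Ioo 0 a, φ u) - a * c := by
    rw [integral_sub ((phi_intOn hf haT).const_mul h) const_intOn, setIntegral_const,
      integral_const_mul, measureReal_def, Real.volume_Ioo, sub_zero, ENNReal.toReal_ofReal ha.le, smul_eq_mul]
  rw [hcompute] at hreal
  set A : ℝ := ∫ u in Ioo 0 a, φ u with hA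
  have hdiv : a⁻¹ * A - h⁻¹ * c = (h * A - a * c) / (a * h) := by
    field_simp
  have hd2 : (h * A - a * c) / (a * h) ≤ M := by
    rw [div_le_iff₀ (by positivity)]
    calc h * A - a * c ≤ a * h * M := hreal
      _ = M * (a * h) := by ring
  linarith

lemma chain (hβ0 : 1/2 < β) (hβ1 : β < 1) (hT : 0 < T) (hf : ContinuousOn f (Icc 0 T))
    (hD : Dpr β T f ≠ ⊤) {t : ℝ} (ht : 0 < t) (htT : t ≤ T) :
    t⁻¹ * ∫ u in Ioo 0 t, ‖f u - f 0‖ ≤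
      (2 * (1 - ((1:ℝ)/2) ^ (β - 1/2))⁻¹) * t ^ (β - 1/2) *
        Real.sqrt (Dpr β T f).toReal := by
  set DR : ℝ := (Dpr β T f).toReal with hDR
  have hDR0 : 0 ≤ DR := ENNReal.toReal_nonneg
  have hS0 : 0 ≤ Real.sqrt DR := Real.sqrt_nonneg _
  set r : ℝ := ((1:ℝ)/2) ^ (β - 1/2) with hr
  have hr0 : 0 < r := Real.rpow_pos_of_pos (by norm_num) _
  have hr1 : r < 1 := Real.rpow_lt_one (by norm_num) (by norm_num) (by linarith)
  set bavg : ℝ → ℝ := fun a => a⁻¹ * ∫ u in Ioo 0 a, ‖f u - f 0‖ with hbavg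
  have hpos : ∀ N : ℕ, (0:ℝ) < t / 2 ^ N := fun N => div_pos ht (by positivity)
  have hleT : ∀ N : ℕ, t / 2 ^ N ≤ T := fun N =>
    le_trans (div_le_self ht.le (one_le_pow₀ (by norm_num))) htT
  -- dyadic iteration
  have ind : ∀ N : ℕ, bavg t ≤ bavg (t / 2 ^ N) +
      (∑ n ∈ Finset.range N, (t / 2 ^ n) ^ (β - 1/2)) * (2 * Real.sqrt DR) := by
    intro N
    induction N with
    | zero => simp
    | succ N ih =>
      have hstep := step hβ0 hT hf hD (hpos N) (hleT N)
      have hdiv : t / 2 ^ N / 2 = t / 2 ^ (N + 1) := by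
        rw [pow_succ]; ring
      rw [hdiv] at hstep
      rw [Finset.sum_range_succ, add_mul]
      calc bavg t ≤ bavg (t / 2 ^ N) +
            (∑ n ∈ Finset.range N, (t / 2 ^ n) ^ (β - 1/2)) * (2 * Real.sqrt DR) := ih
        _ ≤ (bavg (t / 2 ^ (N+1)) + 2 * (t / 2 ^ N) ^ (β - 1/2) * Real.sqrt DR) +
            (∑ n ∈ Finset.range N, (t / 2 ^ n) ^ (β - 1/2)) * (2 * Real.sqrt DR) :=
              add_le_add_left hstep _
        _ = bavg (t / 2 ^ (N+1)) +
            ((∑ n ∈ Finset.range N, (t / 2 ^ n) ^ (β - 1/2)) * (2 * Real.sqrt DR) +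
              (t / 2 ^ N) ^ (β - 1/2) * (2 * Real.sqrt DR)) := by ring
  -- geometric bound on the sum
  have hterm : ∀ n : ℕ, (t / 2 ^ n) ^ (β - 1/2) = t ^ (β - 1/2) * r ^ n := by
    intro n
    have h1 : t / 2 ^ n = t * ((1:ℝ)/2) ^ n := by
      rw [div_eq_mul_inv, ← inv_pow, one_div]
    rw [h1, Real.mul_rpow ht.le (by positivity)]
    congr 1
    rw [← Real.rpow_natCast ((1:ℝ)/2) n, ← Real.rpow_mul (by norm_num), mul_comm,
      Real.rpow_mul (by norm_num), Real.rpow_natCast]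
  have hsum : ∀ N : ℕ, (∑ n ∈ Finset.range N, (t / 2 ^ n) ^ (β - 1/2)) ≤
      t ^ (β - 1/2) * (1 - r)⁻¹ := by
    intro N
    have : (∑ n ∈ Finset.range N, (t / 2 ^ n) ^ (β - 1/2)) =
        t ^ (β - 1/2) * ∑ n ∈ Finset.range N, r ^ n := by
      rw [Finset.mul_sum]
      exact Finset.sum_congr rfl fun n _ => hterm n
    rw [this]
    have hle : (∑ n ∈ Finset.range N, r ^ n) ≤ (1 - r)⁻¹ := by
      have h1 := Summable.sum_le_tsum (Finset.range N) (fun i _ => (pow_nonneg hr0.le i))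
        (summable_geometric_of_lt_one hr0.le hr1)
      rwa [tsum_geometric_of_lt_one hr0.le hr1] at h1
    exact mul_le_mul_of_nonneg_left hle (by positivity)
  -- epsilon argument
  have hfinal : ∀ ε > (0:ℝ), bavg t ≤
      (2 * (1 - r)⁻¹) * t ^ (β - 1/2) * Real.sqrt DR + ε := by
    intro ε hε
    -- continuity of φ at 0
    have hc0 : ContinuousWithinAt (fun u => ‖f u - f 0‖) (Icc 0 T) 0 :=
      ((hf 0 ⟨le_rfl, hT.le⟩).sub continuousWithinAt_const).norm
    rw [Metric.continuousWithinAt_iff] at hc0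
    obtain ⟨δ, hδ0, hδ⟩ := hc0 ε hε
    obtain ⟨N, hN⟩ := exists_pow_lt_of_lt_one (div_pos hδ0 ht) (show (1:ℝ)/2 < 1 by norm_num)
    set a : ℝ := t / 2 ^ N with ha
    have haδ : a < δ := by
      have h1 : t / 2 ^ N = t * ((1:ℝ)/2) ^ N := by
        rw [div_eq_mul_inv, ← inv_pow, one_div]
      rw [ha, h1]
      calc t * ((1:ℝ)/2) ^ N < t * (δ / t) := by
            exact mul_lt_mul_of_pos_left hN ht
        _ = δ := by field_simp
    have hbound : bavg a ≤ ε := by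
      have hmono : (∫ u in Ioo 0 a, ‖f u - f 0‖) ≤ ∫ _ in Ioo 0 a, ε := by
        refine setIntegral_mono_on (phi_intOn hf (hleT N)) const_intOn measurableSet_Ioo ?_
        intro u hu
        have huI : u ∈ Icc (0:ℝ) T := ⟨hu.1.le, le_trans (le_trans hu.2.le (hleT N)) le_rfl⟩
        have hud : dist u 0 < δ := by
          rw [Real.dist_eq, sub_zero, abs_of_pos hu.1]
          exact lt_trans hu.2 haδ
        have := hδ huI hud
        rw [Real.dist_eq] at this
        have h0 : ‖f 0 - f 0‖ = 0 := by simp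
        rw [h0, sub_zero, abs_of_nonneg (norm_nonneg _)] at this
        exact this.le
      have hconst : (∫ _ in Ioo 0 a, ε) = a * ε := by
        rw [setIntegral_const, measureReal_def, Real.volume_Ioo, sub_zero,
          ENNReal.toReal_ofReal (hpos N).le, smul_eq_mul]
      rw [hbavg]
      calc a⁻¹ * ∫ u in Ioo 0 a, ‖f u - f 0‖ ≤ a⁻¹ * (a * ε) := by
            refine mul_le_mul_of_nonneg_left ?_ (by positivity)
            rw [← hconst]; exact hmono
        _ = ε := by rw [← mul_assoc, inv_mul_cancel₀ (hpos N).ne', one_mul]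
    calc bavg t ≤ bavg a + (∑ n ∈ Finset.range N, (t / 2 ^ n) ^ (β - 1/2)) *
          (2 * Real.sqrt DR) := ind N
      _ ≤ ε + (t ^ (β - 1/2) * (1 - r)⁻¹) * (2 * Real.sqrt DR) := by
          refine add_le_add hbound (mul_le_mul_of_nonneg_right (hsum N) (by positivity))
      _ = (2 * (1 - r)⁻¹) * t ^ (β - 1/2) * Real.sqrt DR + ε := by ring
  -- remove epsilon
  by_contra hcon
  push_neg at hcon
  set B := (2 * (1 - r)⁻¹) * t ^ (β - 1/2) * Real.sqrt DR with hB
  have h2 : bavg t = t⁻¹ * ∫ u in Ioo 0 t, ‖f u - f 0‖ := rfl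
  have h1 := hfinal ((t⁻¹ * (∫ u in Ioo 0 t, ‖f u - f 0‖) - B)/2) (by linarith)
  rw [h2] at h1
  linarith


set_option maxHeartbeats 1000000 in
lemma pointwise (hβ0 : 1/2 < β) (hβ1 : β < 1) (hT : 0 < T) (hf : ContinuousOn f (Icc 0 T))
    (hD : Dpr β T f ≠ ⊤) {t : ℝ} (ht : t ∈ Ioo 0 T) :
    ENNReal.ofReal (‖f t‖ ^ 2) ≤
      ENNReal.ofReal (3 * ‖f 0‖ ^ 2) +
        ENNReal.ofReal (3 * (2 * (1 - ((1:ℝ)/2) ^ (β - 1/2))⁻¹) ^ 2 * T ^ (2*β - 1)) *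
          Dpr β T f +
        ENNReal.ofReal (3 * T ^ (2*β)) *
          (∫⁻ s in Ioo 0 t, ENNReal.ofReal (‖f t - f s‖ ^ 2 / (t - s) ^ (1 + 2 * β))) := by
  set K : ℝ := 2 * (1 - ((1:ℝ)/2) ^ (β - 1/2))⁻¹ with hK
  have hr0 : 0 < ((1:ℝ)/2) ^ (β - 1/2) := Real.rpow_pos_of_pos (by norm_num) _
  have hr1 : ((1:ℝ)/2) ^ (β - 1/2) < 1 :=
    Real.rpow_lt_one (by norm_num) (by norm_num) (by linarith)
  have hK0 : 0 < K := by
    rw [hK]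
    have : 0 < (1 - ((1:ℝ)/2) ^ (β - 1/2))⁻¹ := inv_pos.2 (by linarith)
    linarith
  set Dt : ℝ≥0∞ := ∫⁻ s in Ioo 0 t, ENNReal.ofReal (‖f t - f s‖ ^ 2 / (t - s) ^ (1 + 2 * β))
    with hDt
  by_cases hDtop : Dt = ⊤
  · rw [hDtop, ENNReal.mul_top (by
      simp only [ne_eq, ENNReal.ofReal_eq_zero, not_le]
      positivity)]
    rw [add_top]
    exact le_top
  -- finite case
  set g : ℝ := Dt.toReal with hg
  have hg0 : 0 ≤ g := ENNReal.toReal_nonneg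
  have hDtg : Dt = ENNReal.ofReal g := (ENNReal.ofReal_toReal hDtop).symm
  set DR : ℝ := (Dpr β T f).toReal with hDR
  have hDR0 : 0 ≤ DR := ENNReal.toReal_nonneg
  have ht0 : 0 < t := ht.1
  have htT : t < T := ht.2
  set φ : ℝ → ℝ := fun u => ‖f u - f 0‖ with hφ
  set A : ℝ := ∫ u in Ioo 0 t, φ u with hA
  set Idist : ℝ := ∫ s in Ioo 0 t, ‖f t - f s‖ with hId
  have hint1 : IntegrableOn (fun s => ‖f t - f s‖) (Ioo 0 t) volume :=
    dist_intOn hf t htT.le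
  -- step 1 : φ t ≤ t⁻¹ * A + t⁻¹ * Idist
  have h1 : φ t ≤ t⁻¹ * A + t⁻¹ * Idist := by
    have hmono : (∫ s in Ioo 0 t, (φ t - φ s)) ≤ Idist :=
      setIntegral_mono_on (const_intOn.sub (phi_intOn hf htT.le)) hint1 measurableSet_Ioo
        (fun s _ => phi_sub_le f t s)
    have hcomp : (∫ s in Ioo 0 t, (φ t - φ s)) = t * φ t - A := by
      rw [integral_sub const_intOn (phi_intOn hf htT.le), setIntegral_const, measureReal_def, Real.volume_Ioo,
        sub_zero, ENNReal.toReal_ofReal ht0.le, smul_eq_mul]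
    rw [hcomp] at hmono
    have := mul_le_mul_of_nonneg_left (show t * φ t ≤ A + Idist by linarith)
      (inv_nonneg.2 ht0.le)
    rw [inv_mul_cancel_left₀ ht0.ne'] at this
    linarith [this, mul_add t⁻¹ A Idist]
  -- step 2 : Idist bound via Cauchy-Schwarz
  have hGm : AEMeasurable (fun s => ENNReal.ofReal ‖f t - f s‖) (volume.restrict (Ioo 0 t)) := by
    have hcont : ContinuousOn (fun s => ‖f t - f s‖) (Ioo 0 t) :=
      (continuousOn_const.sub (hf.mono (fun s hs => ⟨hs.1.le, le_trans hs.2.le htT.le⟩))).norm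
    exact (hcont.aestronglyMeasurable measurableSet_Ioo).aemeasurable.ennreal_ofReal
  have h2 : ENNReal.ofReal Idist ≤
      (ENNReal.ofReal (t ^ (1 + 2*β)) * Dt) ^ ((1:ℝ)/2) * (ENNReal.ofReal t) ^ ((1:ℝ)/2) := by
    refine le_trans (ofReal_integral_le hint1) ?_
    refine le_trans (lintegral_le_sqrt _ hGm) ?_
    have huniv : (volume.restrict (Ioo (0:ℝ) t)) univ = ENNReal.ofReal t := by
      rw [Measure.restrict_apply_univ, Real.volume_Ioo, sub_zero]
    rw [huniv]
    refine mul_le_mul_left (ENNReal.rpow_le_rpow ?_ (by norm_num)) _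
    have hb : ∀ᵐ s ∂(volume.restrict (Ioo (0:ℝ) t)),
        (ENNReal.ofReal ‖f t - f s‖) ^ (2:ℝ) ≤
          ENNReal.ofReal (t ^ (1 + 2*β)) *
            ENNReal.ofReal (‖f t - f s‖ ^ 2 / (t - s) ^ (1 + 2 * β)) := by
      filter_upwards [self_mem_ae_restrict measurableSet_Ioo] with s hs
      have hts : 0 < t - s := sub_pos.2 hs.2
      have h2a : (ENNReal.ofReal ‖f t - f s‖) ^ (2:ℝ) =
          ENNReal.ofReal (‖f t - f s‖ ^ 2) := by
        rw [show (2:ℝ) = ((2:ℕ):ℝ) by norm_num, ENNReal.rpow_natCast,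
          ← ENNReal.ofReal_pow (norm_nonneg _)]
      rw [h2a, ← ENNReal.ofReal_mul (by positivity)]
      apply ENNReal.ofReal_le_ofReal
      have hpow : (t - s) ^ (1 + 2*β) ≤ t ^ (1 + 2*β) :=
        Real.rpow_le_rpow hts.le (by linarith [hs.1]) (by linarith)
      have hpowpos : 0 < (t - s) ^ (1 + 2*β) := Real.rpow_pos_of_pos hts _
      calc ‖f t - f s‖ ^ 2
          = ‖f t - f s‖ ^ 2 / (t - s) ^ (1 + 2*β) * (t - s) ^ (1 + 2*β) :=
            (div_mul_cancel₀ _ hpowpos.ne').symm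
        _ ≤ ‖f t - f s‖ ^ 2 / (t - s) ^ (1 + 2*β) * t ^ (1 + 2*β) :=
            mul_le_mul_of_nonneg_left hpow (by positivity)
        _ = t ^ (1 + 2*β) * (‖f t - f s‖ ^ 2 / (t - s) ^ (1 + 2*β)) := mul_comm _ _
    calc ∫⁻ s in Ioo 0 t, (ENNReal.ofReal ‖f t - f s‖) ^ (2:ℝ)
        ≤ ∫⁻ s in Ioo 0 t, ENNReal.ofReal (t ^ (1 + 2*β)) *
            ENNReal.ofReal (‖f t - f s‖ ^ 2 / (t - s) ^ (1 + 2 * β)) := lintegral_mono_ae hb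
      _ = ENNReal.ofReal (t ^ (1 + 2*β)) * Dt := by
          rw [lintegral_const_mul' _ _ ENNReal.ofReal_ne_top, hDt]
  -- real form of step 2
  have h2r : Idist ≤ (t ^ (1 + 2*β) * g) ^ ((1:ℝ)/2) * t ^ ((1:ℝ)/2) := by
    rw [hDtg, ← ENNReal.ofReal_mul (by positivity),
      ENNReal.ofReal_rpow_of_nonneg (by positivity) (by norm_num),
      ENNReal.ofReal_rpow_of_nonneg ht0.le (by norm_num),
      ← ENNReal.ofReal_mul (by positivity)] at h2
    exact (ENNReal.ofReal_le_ofReal_iff (by positivity)).mp h2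
  -- step 3 : t⁻¹ * Idist ≤ t ^ β * sqrt g
  have h3 : t⁻¹ * Idist ≤ t ^ (β:ℝ) * Real.sqrt g := by
    refine le_trans (mul_le_mul_of_nonneg_left h2r (inv_nonneg.2 ht0.le)) ?_
    refine le_of_pow_le_pow_left₀ two_ne_zero (by positivity) (le_of_eq ?_)
    have hsq1 : ((t ^ (1 + 2*β) * g) ^ ((1:ℝ)/2)) ^ (2:ℕ) = t ^ (1 + 2*β) * g := by
      rw [← Real.rpow_natCast ((t ^ (1 + 2*β) * g) ^ ((1:ℝ)/2)) 2,
        ← Real.rpow_mul (by positivity)]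
      norm_num
    have hsq2 : (t ^ ((1:ℝ)/2)) ^ (2:ℕ) = t := by
      rw [← Real.rpow_natCast (t ^ ((1:ℝ)/2)) 2, ← Real.rpow_mul ht0.le]
      norm_num
    have hsq3 : (t ^ (β:ℝ)) ^ (2:ℕ) = t ^ (2*β) := by
      rw [← Real.rpow_natCast (t ^ (β:ℝ)) 2, ← Real.rpow_mul ht0.le]
      congr 1; ring
    have hsq4 : (Real.sqrt g) ^ (2:ℕ) = g := Real.sq_sqrt hg0
    have hsq5 : t ^ (1 + 2*β) = t * t ^ (2*β) := by
      rw [show (1 + 2*β) = 1 + 2*β from rfl, Real.rpow_add ht0, Real.rpow_one]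
    calc (t⁻¹ * ((t ^ (1 + 2*β) * g) ^ ((1:ℝ)/2) * t ^ ((1:ℝ)/2))) ^ (2:ℕ)
        = t⁻¹ ^ (2:ℕ) * (((t ^ (1 + 2*β) * g) ^ ((1:ℝ)/2)) ^ (2:ℕ) *
            (t ^ ((1:ℝ)/2)) ^ (2:ℕ)) := by ring
      _ = t⁻¹ ^ (2:ℕ) * (t ^ (1 + 2*β) * g * t) := by rw [hsq1, hsq2]
      _ = t ^ (2*β) * g := by
          rw [hsq5]
          field_simp
      _ = (t ^ (β:ℝ) * Real.sqrt g) ^ (2:ℕ) := by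
          rw [mul_pow, hsq3, hsq4]
  -- step 4 : averaged chaining bound
  have h4 : t⁻¹ * A ≤ K * t ^ (β - 1/2) * Real.sqrt DR :=
    chain hβ0 hβ1 hT hf hD ht0 htT.le
  -- combine
  have h5 : ‖f t‖ ≤ ‖f 0‖ + φ t := by
    have := norm_sub_norm_le (f t) (f 0)
    rw [hφ]
    simp only
    linarith [norm_sub_norm_le (f t) (f 0)]
  have hmono1 : t ^ (β - 1/2) ≤ T ^ (β - 1/2) :=
    Real.rpow_le_rpow ht0.le htT.le (by linarith)
  have hmono2 : t ^ (β:ℝ) ≤ T ^ (β:ℝ) :=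
    Real.rpow_le_rpow ht0.le htT.le (by linarith)
  have htotal : ‖f t‖ ≤ ‖f 0‖ + K * T ^ (β - 1/2) * Real.sqrt DR +
      T ^ (β:ℝ) * Real.sqrt g := by
    have e1 : K * t ^ (β - 1/2) * Real.sqrt DR ≤ K * T ^ (β - 1/2) * Real.sqrt DR := by
      have := mul_le_mul_of_nonneg_left hmono1 hK0.le
      exact mul_le_mul_of_nonneg_right this (Real.sqrt_nonneg _)
    have e2 : t ^ (β:ℝ) * Real.sqrt g ≤ T ^ (β:ℝ) * Real.sqrt g :=
      mul_le_mul_of_nonneg_right hmono2 (Real.sqrt_nonneg _)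
    calc ‖f t‖ ≤ ‖f 0‖ + φ t := h5
      _ ≤ ‖f 0‖ + (t⁻¹ * A + t⁻¹ * Idist) := by linarith
      _ ≤ ‖f 0‖ + K * t ^ (β - 1/2) * Real.sqrt DR + t ^ (β:ℝ) * Real.sqrt g := by
          linarith
      _ ≤ ‖f 0‖ + K * T ^ (β - 1/2) * Real.sqrt DR + T ^ (β:ℝ) * Real.sqrt g := by
          linarith
  have hTc2 : (T ^ (β - 1/2)) ^ (2:ℕ) = T ^ (2*β - 1) := by
    rw [← Real.rpow_natCast (T ^ (β - 1/2)) 2, ← Real.rpow_mul hT.le]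
    congr 1; ring
  have hTb2 : (T ^ (β:ℝ)) ^ (2:ℕ) = T ^ (2*β) := by
    rw [← Real.rpow_natCast (T ^ (β:ℝ)) 2, ← Real.rpow_mul hT.le]
    congr 1; ring
  have hsDR : (Real.sqrt DR) ^ (2:ℕ) = DR := Real.sq_sqrt hDR0
  have hsg : (Real.sqrt g) ^ (2:ℕ) = g := Real.sq_sqrt hg0
  have h6 : ‖f t‖ ^ 2 ≤ 3 * ‖f 0‖ ^ 2 + 3 * K ^ 2 * T ^ (2*β - 1) * DR +
      3 * T ^ (2*β) * g := by
    set x := ‖f 0‖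
    set y := K * T ^ (β - 1/2) * Real.sqrt DR with hy
    set z := T ^ (β:ℝ) * Real.sqrt g with hz
    have hx0 : 0 ≤ x := norm_nonneg _
    have hy0 : 0 ≤ y := by positivity
    have hz0 : 0 ≤ z := by positivity
    have hsq : ‖f t‖ ^ 2 ≤ (x + y + z) ^ 2 :=
      pow_le_pow_left₀ (norm_nonneg _) htotal 2
    have hy2 : y ^ 2 = K ^ 2 * T ^ (2*β - 1) * DR := by
      rw [hy, show (K * T ^ (β - 1/2) * Real.sqrt DR) ^ 2 =
        K ^ 2 * (T ^ (β - 1/2)) ^ (2:ℕ) * (Real.sqrt DR) ^ (2:ℕ) by ring, hTc2, hsDR]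
    have hz2 : z ^ 2 = T ^ (2*β) * g := by
      rw [hz, show (T ^ (β:ℝ) * Real.sqrt g) ^ 2 =
        (T ^ (β:ℝ)) ^ (2:ℕ) * (Real.sqrt g) ^ (2:ℕ) by ring, hTb2, hsg]
    calc ‖f t‖ ^ 2 ≤ (x + y + z) ^ 2 := hsq
      _ ≤ 3 * x ^ 2 + 3 * y ^ 2 + 3 * z ^ 2 := three_sq x y z
      _ = 3 * ‖f 0‖ ^ 2 + 3 * K ^ 2 * T ^ (2*β - 1) * DR + 3 * T ^ (2*β) * g := by
          rw [hy2, hz2]; ring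
  calc ENNReal.ofReal (‖f t‖ ^ 2)
      ≤ ENNReal.ofReal (3 * ‖f 0‖ ^ 2 + 3 * K ^ 2 * T ^ (2*β - 1) * DR +
          3 * T ^ (2*β) * g) := ENNReal.ofReal_le_ofReal h6
    _ ≤ ENNReal.ofReal (3 * ‖f 0‖ ^ 2) +
        ENNReal.ofReal (3 * K ^ 2 * T ^ (2*β - 1)) * Dpr β T f +
        ENNReal.ofReal (3 * T ^ (2*β)) * Dt := by
        rw [ENNReal.ofReal_add (by positivity) (by positivity),
          ENNReal.ofReal_add (by positivity) (by positivity)]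
        refine add_le_add (add_le_add le_rfl ?_) ?_
        · rw [ENNReal.ofReal_mul (by positivity)]
          exact mul_le_mul_right ENNReal.ofReal_toReal_le _
        · rw [ENNReal.ofReal_mul (by positivity)]
          exact mul_le_mul_right ENNReal.ofReal_toReal_le _

end
end L2BoundAux

open L2BoundAux in
/-- **Lemma 3.7.** For `β ∈ (1/2,1)` there is `C > 0`, depending only on
`β`, such that for every `T > 0` and every `f ∈ H^β(0,T;V)` (continuous with finite
Gagliardo seminorm),
`‖f‖²_{L²(0,T;V)} ≤ C T (‖f(0)‖² + T^{2β-1} ∫_0^T ∫_0^t ‖f(t)-f(s)‖²/(t-s)^{1+2β} ds dt)`. -/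
theorem L2_bound_by_value_at_zero_and_seminorm {V : Type*} [NormedAddCommGroup V]
    [InnerProductSpace ℂ V] [CompleteSpace V]
    (β : ℝ) (hβ0 : 1 / 2 < β) (hβ1 : β < 1) :
    ∃ C > 0, ∀ T > (0:ℝ), ∀ f : ℝ → V, ContinuousOn f (Icc 0 T) →
      (∫⁻ t in Ioo (0:ℝ) T, ∫⁻ s in Ioo (0:ℝ) t,
          ENNReal.ofReal (‖f t - f s‖ ^ 2 / (t - s) ^ (1 + 2 * β)) ≠ ⊤) →
      ∫⁻ t in Ioo (0:ℝ) T, ENNReal.ofReal (‖f t‖ ^ 2)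
        ≤ ENNReal.ofReal (C * T) *
          (ENNReal.ofReal (‖f 0‖ ^ 2) +
            ENNReal.ofReal (T ^ (2 * β - 1)) *
              ∫⁻ t in Ioo (0:ℝ) T, ∫⁻ s in Ioo (0:ℝ) t,
                ENNReal.ofReal (‖f t - f s‖ ^ 2 / (t - s) ^ (1 + 2 * β))) := by
  set K : ℝ := 2 * (1 - ((1:ℝ)/2) ^ (β - 1/2))⁻¹ with hK
  refine ⟨3 * K ^ 2 + 3, by positivity, ?_⟩
  intro T hT f hf hD
  rw [diter_eq hf] at hD ⊢
  set C : ℝ := 3 * K ^ 2 + 3 with hC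
  set c1 : ℝ≥0∞ := ENNReal.ofReal (3 * ‖f 0‖ ^ 2) with hc1
  set c2 : ℝ≥0∞ := ENNReal.ofReal (3 * K ^ 2 * T ^ (2*β - 1)) with hc2
  set c3 : ℝ≥0∞ := ENNReal.ofReal (3 * T ^ (2*β)) with hc3
  have hstep : ∫⁻ t in Ioo (0:ℝ) T, ENNReal.ofReal (‖f t‖ ^ 2) ≤
      ∫⁻ t in Ioo (0:ℝ) T, (c1 + c2 * Dpr β T f + c3 *
        (∫⁻ s in Ioo (0:ℝ) t, ENNReal.ofReal (‖f t - f s‖ ^ 2 / (t - s) ^ (1 + 2 * β)))) := by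
    refine lintegral_mono_ae ?_
    filter_upwards [ae_restrict_mem measurableSet_Ioo] with t ht
    exact pointwise hβ0 hβ1 hT hf hD ht
  refine le_trans hstep ?_
  have hsplit : (∫⁻ t in Ioo (0:ℝ) T, (c1 + c2 * Dpr β T f + c3 *
      (∫⁻ s in Ioo (0:ℝ) t, ENNReal.ofReal (‖f t - f s‖ ^ 2 / (t - s) ^ (1 + 2 * β))))) =
      (c1 + c2 * Dpr β T f) * ENNReal.ofReal T + c3 * Dpr β T f := by
    rw [lintegral_add_left measurable_const]
    rw [setLIntegral_const, Real.volume_Ioo, sub_zero]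
    congr 1
    rw [lintegral_const_mul' _ _ ENNReal.ofReal_ne_top, diter_eq hf]
  rw [hsplit]
  -- final ENNReal algebra
  have hTT : T ^ (2*β - 1) * T = T ^ (2*β) := by
    have h := Real.rpow_add hT (2*β - 1) 1
    rw [Real.rpow_one] at h
    rw [← h]
    congr 1
    ring
  have hCT : (0:ℝ) ≤ C * T := by positivity
  have e1 : c1 * ENNReal.ofReal T ≤ ENNReal.ofReal (C * T) * ENNReal.ofReal (‖f 0‖ ^ 2) := by
    rw [hc1, ← ENNReal.ofReal_mul (by positivity), ← ENNReal.ofReal_mul hCT]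
    apply ENNReal.ofReal_le_ofReal
    have h3C : (3:ℝ) ≤ C := by
      have hKsq : (0:ℝ) ≤ 3 * K ^ 2 := by positivity
      rw [hC]; linarith
    calc 3 * ‖f 0‖ ^ 2 * T = ‖f 0‖ ^ 2 * T * 3 := by ring
      _ ≤ ‖f 0‖ ^ 2 * T * C := mul_le_mul_of_nonneg_left h3C (by positivity)
      _ = C * T * ‖f 0‖ ^ 2 := by ring
  have e2 : c2 * ENNReal.ofReal T + c3 = ENNReal.ofReal (C * T) * ENNReal.ofReal (T ^ (2*β - 1)) := by
    rw [hc2, hc3, ← ENNReal.ofReal_mul (by positivity), ← ENNReal.ofReal_mul hCT,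
      ← ENNReal.ofReal_add (by positivity) (by positivity)]
    congr 1
    rw [hC]
    calc 3 * K ^ 2 * T ^ (2*β - 1) * T + 3 * T ^ (2*β)
        = 3 * K ^ 2 * (T ^ (2*β - 1) * T) + 3 * T ^ (2*β) := by ring
      _ = (3 * K ^ 2 + 3) * T ^ (2*β) := by rw [hTT]; ring
      _ = (3 * K ^ 2 + 3) * T * T ^ (2*β - 1) := by rw [← hTT]; ring
  calc (c1 + c2 * Dpr β T f) * ENNReal.ofReal T + c3 * Dpr β T f
      = c1 * ENNReal.ofReal T + (c2 * ENNReal.ofReal T + c3) * Dpr β T f := by ring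
    _ ≤ ENNReal.ofReal (C * T) * ENNReal.ofReal (‖f 0‖ ^ 2) +
        (ENNReal.ofReal (C * T) * ENNReal.ofReal (T ^ (2*β - 1))) * Dpr β T f := by
        refine add_le_add e1 ?_
        rw [e2]
    _ = ENNReal.ofReal (C * T) *
        (ENNReal.ofReal (‖f 0‖ ^ 2) + ENNReal.ofReal (T ^ (2 * β - 1)) * Dpr β T f) := by
        rw [show (2*β - 1 : ℝ) = 2 * β - 1 from rfl]
        ring
end

section
/- Let $V$ be a Hilbert space, $\beta \in (1/2, 1)$ and $T > 0$. Suppose there is NO constant $C>0$ such that $\|f\|_{L^2(0,T;V)}^2 \le C(\|f(0)\|_V^2 + [f]_{H^\beta(0,T;V)}^2)$ for all $f \in H^\beta(0,T;V)$. Then one obtains a contradiction; equivalently: the norm $f \mapsto (\|f(0)\|_V^2 + [f]_{H^\beta(0,T;V)}^2)^{1/2}$ is equivalent to the standard norm $(\|f\|_{L^2(0,T;V)}^2 + [f]_{H^\beta(0,T;V)}^2)^{1/2}$ on $H^\beta(0,T;V)$. -/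
open MeasureTheory Set
set_option linter.unusedSectionVars false
set_option maxHeartbeats 1000000

section Aux

variable {V : Type*} [NormedAddCommGroup V] [NormedSpace ℝ V] [CompleteSpace V]

/-- The kernel of the Gagliardo seminorm. -/
noncomputable def kern (g : ℝ → V) (β t s : ℝ) : ENNReal :=
  ENNReal.ofReal (‖g t - g s‖ ^ 2 / (t - s) ^ (1 + 2 * β))

/-- The Gagliardo seminorm (squared), as an extended real. -/
noncomputable def Sem (g : ℝ → V) (β T : ℝ) : ENNReal :=
  ∫⁻ t in Ioo (0:ℝ) T, ∫⁻ s in Ioo (0:ℝ) t, kern g β t s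

/-- Average of `g` over `(a/2, a)`. -/
noncomputable def avgH (g : ℝ → V) (a : ℝ) : V :=
  (2 / a) • ∫ v in Ioo (a/2) a, g v

lemma memL2_of_bound {α : Type*} [MeasurableSpace α] {μ : Measure α} [IsFiniteMeasure μ]
    {h : α → V} (hmeas : AEStronglyMeasurable h μ) (M : ℝ) (hb : ∀ᵐ x ∂μ, ‖h x‖ ≤ M) :
    MemLp h 2 μ :=
  (memLp_top_of_bound hmeas M hb).mono_exponent le_top

lemma sq_triangle {x y z : ℝ} (h : x ≤ y + z) (hx : 0 ≤ x) (hy : 0 ≤ y) (hz : 0 ≤ z) :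
    x^2 ≤ 2*y^2 + 2*z^2 := by nlinarith [sq_nonneg (y - z)]

/-- Cauchy–Schwarz for vector-valued integrals on a finite measure. -/
lemma norm_integral_sq_le {α : Type*} [MeasurableSpace α] (μ : Measure α) [IsFiniteMeasure μ]
    {h : α → V} (hm : MemLp h 2 μ) :
    ‖∫ x, h x ∂μ‖ ^ 2 ≤ (μ univ).toReal * ∫ x, ‖h x‖ ^ 2 ∂μ := by
  have hA : (0:ℝ) ≤ ∫ x, ‖h x‖ ^ 2 ∂μ := integral_nonneg fun x => sq_nonneg _
  have hB : (0:ℝ) ≤ (μ univ).toReal := ENNReal.toReal_nonneg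
  have hpq : (2:ℝ).HolderConjugate 2 := ⟨by norm_num, by norm_num, by norm_num⟩
  have hmn : MemLp (fun x => ‖h x‖) (ENNReal.ofReal 2) μ := by
    have : (ENNReal.ofReal 2) = (2 : ENNReal) := by norm_num
    rw [this]; exact hm.norm
  have hone : MemLp (fun _ : α => (1:ℝ)) (ENNReal.ofReal 2) μ := memLp_const 1
  have key := integral_mul_le_Lp_mul_Lq_of_nonneg hpq
    (ae_of_all μ fun x => norm_nonneg (h x)) (ae_of_all μ fun _ => zero_le_one) hmn hone
  simp only [mul_one, Real.one_rpow, integral_const, smul_eq_mul] at key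
  have hrw : ∫ x, ‖h x‖ ^ (2:ℝ) ∂μ = ∫ x, ‖h x‖ ^ 2 ∂μ := by
    congr 1; funext x; rw [show ((2:ℝ) = ((2:ℕ):ℝ)) by norm_num, Real.rpow_natCast]
  rw [hrw] at key
  have key2 : ∫ x, ‖h x‖ ∂μ ≤ (∫ x, ‖h x‖ ^ 2 ∂μ) ^ ((1:ℝ)/2) * ((μ univ).toReal) ^ ((1:ℝ)/2) := by
    simpa [Measure.real] using key
  calc ‖∫ x, h x ∂μ‖ ^ 2 ≤ (∫ x, ‖h x‖ ∂μ) ^ 2 :=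
        pow_le_pow_left₀ (norm_nonneg _) (norm_integral_le_integral_norm h) 2
    _ ≤ ((∫ x, ‖h x‖ ^ 2 ∂μ) ^ ((1:ℝ)/2) * ((μ univ).toReal) ^ ((1:ℝ)/2)) ^ 2 :=
        pow_le_pow_left₀ (integral_nonneg fun _ => norm_nonneg _) key2 2
    _ = (μ univ).toReal * ∫ x, ‖h x‖ ^ 2 ∂μ := by
        rw [mul_pow, ← Real.rpow_natCast ((∫ x, ‖h x‖ ^ 2 ∂μ) ^ ((1:ℝ)/2)) 2,
          ← Real.rpow_natCast (((μ univ).toReal) ^ ((1:ℝ)/2)) 2,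
          ← Real.rpow_mul hA, ← Real.rpow_mul hB]
        norm_num [mul_comm]

lemma real_int_le_toReal {α : Type*} [MeasurableSpace α] (μ : Measure α) {h : α → ℝ}
    (h0 : 0 ≤ᵐ[μ] h) (hm : AEStronglyMeasurable h μ) {B : ENNReal} (hB : B ≠ ⊤)
    (hle : ∫⁻ x, ENNReal.ofReal (h x) ∂μ ≤ B) : ∫ x, h x ∂μ ≤ B.toReal := by
  rw [integral_eq_lintegral_of_nonneg_ae h0 hm]
  exact ENNReal.toReal_mono hB hle

lemma kern_measurable {g : ℝ → V} (hg : Continuous g) (β : ℝ) :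
    Measurable (fun z : ℝ × ℝ => kern g β z.1 z.2) := by
  apply ENNReal.measurable_ofReal.comp
  apply Measurable.div
  · exact (((hg.comp continuous_fst).sub (hg.comp continuous_snd)).norm.pow 2).measurable
  · exact (measurable_fst.sub measurable_snd).pow measurable_const

lemma inner_lint_measurable {g : ℝ → V} (hg : Continuous g) (β : ℝ) :
    Measurable (fun t : ℝ => ∫⁻ s in Ioo (0:ℝ) t, kern g β t s) := by
  have hset : MeasurableSet {z : ℝ × ℝ | z.2 ∈ Ioo (0:ℝ) z.1} := by
    have : {z : ℝ × ℝ | z.2 ∈ Ioo (0:ℝ) z.1}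
        = {z : ℝ × ℝ | (0:ℝ) < z.2} ∩ {z : ℝ × ℝ | z.2 < z.1} := by
      ext z; simp [Set.mem_setOf_eq, and_comm]
    rw [this]
    exact (measurableSet_lt measurable_const measurable_snd).inter
      (measurableSet_lt measurable_snd measurable_fst)
  have heq : ∀ t, (∫⁻ s in Ioo (0:ℝ) t, kern g β t s)
      = ∫⁻ s, ({z : ℝ × ℝ | z.2 ∈ Ioo (0:ℝ) z.1}.indicator
          (fun z => kern g β z.1 z.2)) (t, s) := by
    intro t
    rw [← lintegral_indicator measurableSet_Ioo]
    apply lintegral_congr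
    intro s
    by_cases hs : s ∈ Ioo (0:ℝ) t <;>
      simp_all [Set.indicator, Set.mem_Ioo]
  simp_rw [heq]
  exact ((kern_measurable hg β).indicator hset).lintegral_prod_right'

end Aux

section Main

variable {V : Type*} [NormedAddCommGroup V] [NormedSpace ℝ V] [CompleteSpace V]
variable {g : ℝ → V} {β T : ℝ}

/-- The rectangle double integral is controlled by the seminorm. -/
lemma rect_lint_le (hg : Continuous g) (hβ0 : 1 / 2 < β) {a : ℝ} (ha : 0 < a) (haT : a ≤ T) :
    ∫⁻ z in (Ioo (a/2) a) ×ˢ (Ioo (a/4) (a/2)),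
        ENNReal.ofReal (‖g z.1 - g z.2‖ ^ 2) ∂(volume.prod volume)
      ≤ ENNReal.ofReal (a ^ (1 + 2*β)) * Sem g β T := by
  have hp : (0:ℝ) < 1 + 2*β := by linarith
  have hR : MeasurableSet ((Ioo (a/2) a) ×ˢ (Ioo (a/4) (a/2))) :=
    measurableSet_Ioo.prod measurableSet_Ioo
  have hpt : ∀ z ∈ (Ioo (a/2) a) ×ˢ (Ioo (a/4) (a/2)),
      ENNReal.ofReal (‖g z.1 - g z.2‖ ^ 2)
        ≤ ENNReal.ofReal (a ^ (1 + 2*β)) * kern g β z.1 z.2 := by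
    intro z hz
    obtain ⟨hz1, hz2⟩ := hz
    simp only [Set.mem_Ioo] at hz1 hz2
    have h21 : z.2 < z.1 := lt_trans hz2.2 hz1.1
    have hd : (0:ℝ) < (z.1 - z.2) ^ (1 + 2*β) := Real.rpow_pos_of_pos (by linarith) _
    have hsub : z.1 - z.2 ≤ a := by
      have h4 : 0 < a/4 := by linarith
      linarith [hz1.2, hz2.1]
    have hda : (z.1 - z.2) ^ (1 + 2*β) ≤ a ^ (1 + 2*β) :=
      Real.rpow_le_rpow (by linarith) hsub hp.le
    rw [kern, ← ENNReal.ofReal_mul (by positivity)]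
    apply ENNReal.ofReal_le_ofReal
    calc ‖g z.1 - g z.2‖ ^ 2
        = (‖g z.1 - g z.2‖ ^ 2 / (z.1 - z.2) ^ (1 + 2*β)) * ((z.1 - z.2) ^ (1 + 2*β)) :=
          (div_mul_cancel₀ _ hd.ne').symm
      _ ≤ (‖g z.1 - g z.2‖ ^ 2 / (z.1 - z.2) ^ (1 + 2*β)) * a ^ (1 + 2*β) := by
          apply mul_le_mul_of_nonneg_left hda (by positivity)
      _ = a ^ (1 + 2*β) * (‖g z.1 - g z.2‖ ^ 2 / (z.1 - z.2) ^ (1 + 2*β)) := mul_comm _ _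
  have hrect : (∫⁻ z in (Ioo (a/2) a) ×ˢ (Ioo (a/4) (a/2)),
      kern g β z.1 z.2 ∂(volume.prod volume)) ≤ Sem g β T := by
    rw [← Measure.prod_restrict, lintegral_prod _ ((kern_measurable hg β).aemeasurable)]
    calc ∫⁻ u in Ioo (a/2) a, ∫⁻ v in Ioo (a/4) (a/2), kern g β u v
        ≤ ∫⁻ u in Ioo (a/2) a, ∫⁻ v in Ioo 0 u, kern g β u v := by
          apply setLIntegral_mono' measurableSet_Ioo
          intro u hu
          apply lintegral_mono_set
          intro v hv
          simp only [Set.mem_Ioo] at hv hu ⊢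
          exact ⟨by linarith [hv.1], lt_trans hv.2 hu.1⟩
      _ ≤ ∫⁻ u in Ioo 0 T, ∫⁻ v in Ioo 0 u, kern g β u v := by
          apply lintegral_mono_set
          intro u hu
          simp only [Set.mem_Ioo] at hu ⊢
          exact ⟨by linarith [hu.1], lt_of_lt_of_le hu.2 haT⟩
      _ = Sem g β T := rfl
  calc ∫⁻ z in (Ioo (a/2) a) ×ˢ (Ioo (a/4) (a/2)),
      ENNReal.ofReal (‖g z.1 - g z.2‖ ^ 2) ∂(volume.prod volume)
      ≤ ∫⁻ z in (Ioo (a/2) a) ×ˢ (Ioo (a/4) (a/2)),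
          ENNReal.ofReal (a ^ (1 + 2*β)) * kern g β z.1 z.2 ∂(volume.prod volume) :=
        setLIntegral_mono' hR hpt
    _ = ENNReal.ofReal (a ^ (1 + 2*β)) * ∫⁻ z in (Ioo (a/2) a) ×ˢ (Ioo (a/4) (a/2)),
          kern g β z.1 z.2 ∂(volume.prod volume) :=
        lintegral_const_mul' _ _ ENNReal.ofReal_ne_top
    _ ≤ ENNReal.ofReal (a ^ (1 + 2*β)) * Sem g β T := mul_le_mul_right hrect _

/-- Core dyadic estimate. -/
lemma core_est (hg : Continuous g) (hβ0 : 1 / 2 < β) (hfin : Sem g β T ≠ ⊤)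
    {a : ℝ} (ha : 0 < a) (haT : a ≤ T) :
    ‖avgH g a - avgH g (a/2)‖ ^ 2 ≤ 8 * a ^ (2*β - 1) * (Sem g β T).toReal := by
  have hp : (0:ℝ) < 1 + 2*β := by linarith
  set I₁ := Ioo (a/2) a with hI₁
  set I₂ := Ioo (a/4) (a/2) with hI₂
  set π := (volume.restrict I₁).prod (volume.restrict I₂) with hπ
  haveI h1fin : IsFiniteMeasure (volume.restrict I₁) :=
    ⟨by rw [Measure.restrict_apply_univ]; exact measure_Ioo_lt_top⟩
  haveI h2fin : IsFiniteMeasure (volume.restrict I₂) :=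
    ⟨by rw [Measure.restrict_apply_univ]; exact measure_Ioo_lt_top⟩
  have hGc : Continuous fun z : ℝ × ℝ => g z.1 - g z.2 :=
    (hg.comp continuous_fst).sub (hg.comp continuous_snd)
  have hGint : Integrable (fun z : ℝ × ℝ => g z.1 - g z.2) π := by
    rw [hπ, Measure.prod_restrict]
    have hcomp : IsCompact (Icc (a/2) a ×ˢ Icc (a/4) (a/2)) := isCompact_Icc.prod isCompact_Icc
    have h1 : IntegrableOn (fun z : ℝ × ℝ => g z.1 - g z.2)
        (Icc (a/2) a ×ˢ Icc (a/4) (a/2)) volume :=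
      hGc.continuousOn.integrableOn_compact hcomp
    rw [Measure.volume_eq_prod] at h1
    exact h1.mono_set (prod_mono Ioo_subset_Icc_self Ioo_subset_Icc_self)
  have hint1 : IntegrableOn g I₁ volume :=
    (hg.continuousOn.integrableOn_compact isCompact_Icc).mono_set Ioo_subset_Icc_self
  have hint2 : IntegrableOn g I₂ volume :=
    (hg.continuousOn.integrableOn_compact isCompact_Icc).mono_set Ioo_subset_Icc_self
  have hvol1 : (volume.restrict I₁) univ = ENNReal.ofReal (a/2) := by
    rw [Measure.restrict_apply_univ, hI₁, Real.volume_Ioo]; congr 1; ring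
  have hvol2 : (volume.restrict I₂) univ = ENNReal.ofReal (a/4) := by
    rw [Measure.restrict_apply_univ, hI₂, Real.volume_Ioo]; congr 1; ring
  -- the identity
  have hid : avgH g a - avgH g (a/2) = (8/a^2) • ∫ z, (g z.1 - g z.2) ∂π := by
    have hinner : ∀ u : ℝ, ∫ v in I₂, (g u - g v) = (a/4) • g u - ∫ v in I₂, g v := by
      intro u
      rw [integral_sub ((integrableOn_const_iff (C := g u)).2 (Or.inr measure_Ioo_lt_top)) hint2]
      congr 1
      rw [setIntegral_const, Measure.real, Real.volume_Ioo, ENNReal.toReal_ofReal (by linarith)]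
      congr 1
      ring
    rw [hπ, integral_prod _ hGint]
    simp only [hinner]
    have hsm : Integrable (fun x => (a/4) • g x) (volume.restrict I₁) := hint1.smul (a/4)
    rw [integral_sub hsm ((integrableOn_const_iff (C := ∫ v in I₂, g v)).2 (Or.inr measure_Ioo_lt_top))]
    rw [integral_smul, setIntegral_const, Measure.real, Real.volume_Ioo, ENNReal.toReal_ofReal (by linarith)]
    rw [smul_sub, smul_smul, smul_smul]
    rw [avgH, avgH, show a/2/2 = a/4 from by ring]
    congr 1
    · congr 1
      field_simp
      ring
    · congr 1
      field_simp
      ring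
  -- Cauchy–Schwarz
  obtain ⟨M, hM⟩ := (isCompact_Icc : IsCompact (Icc (0:ℝ) a)).exists_bound_of_continuousOn
    hg.continuousOn
  have hae : ∀ᵐ z ∂π, ‖g z.1 - g z.2‖ ≤ M + M := by
    rw [hπ, Measure.prod_restrict]
    filter_upwards [ae_restrict_mem (measurableSet_Ioo.prod measurableSet_Ioo)] with z hz
    obtain ⟨hz1, hz2⟩ := hz
    simp only [hI₁, hI₂, Set.mem_Ioo] at hz1 hz2
    have b1 : ‖g z.1‖ ≤ M := hM _ ⟨by linarith [hz1.1], le_of_lt hz1.2⟩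
    have b2 : ‖g z.2‖ ≤ M := hM _ ⟨by linarith [hz2.1], by linarith [hz2.2]⟩
    calc ‖g z.1 - g z.2‖ ≤ ‖g z.1‖ + ‖g z.2‖ := norm_sub_le _ _
      _ ≤ M + M := add_le_add b1 b2
  have hmem : MemLp (fun z : ℝ × ℝ => g z.1 - g z.2) 2 π :=
    memL2_of_bound hGc.aestronglyMeasurable _ hae
  have hCS := norm_integral_sq_le π hmem
  have hπuniv : (π univ).toReal = a^2/8 := by
    rw [hπ, ← Set.univ_prod_univ, Measure.prod_prod, Measure.restrict_apply_univ,
      Measure.restrict_apply_univ, hI₁, hI₂, Real.volume_Ioo, Real.volume_Ioo,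
      ← ENNReal.ofReal_mul (by linarith), ENNReal.toReal_ofReal (by nlinarith)]
    ring
  have hQ : ∫ z, ‖g z.1 - g z.2‖^2 ∂π ≤ a^(1+2*β) * (Sem g β T).toReal := by
    have hB : ENNReal.ofReal (a^(1+2*β)) * Sem g β T ≠ ⊤ :=
      ENNReal.mul_ne_top ENNReal.ofReal_ne_top hfin
    have hle : ∫⁻ z, ENNReal.ofReal (‖g z.1 - g z.2‖^2) ∂π
        ≤ ENNReal.ofReal (a^(1+2*β)) * Sem g β T := by
      rw [hπ, Measure.prod_restrict]
      exact rect_lint_le hg hβ0 ha haT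
    have := real_int_le_toReal π (ae_of_all _ fun z : ℝ × ℝ => sq_nonneg ‖g z.1 - g z.2‖)
      ((hGc.norm.pow 2).aestronglyMeasurable) hB hle
    rwa [ENNReal.toReal_mul, ENNReal.toReal_ofReal (by positivity)] at this
  have hfinal : ‖avgH g a - avgH g (a/2)‖^2
      ≤ (8/a^2)^2 * ((a^2/8) * (a^(1+2*β) * (Sem g β T).toReal)) := by
    rw [hid, norm_smul, mul_pow, Real.norm_eq_abs, sq_abs]
    apply mul_le_mul_of_nonneg_left _ (by positivity)
    calc ‖∫ z, (g z.1 - g z.2) ∂π‖^2 ≤ (π univ).toReal * ∫ z, ‖g z.1 - g z.2‖^2 ∂π := hCS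
      _ ≤ (a^2/8) * (a^(1+2*β) * (Sem g β T).toReal) := by
          rw [hπuniv]
          exact mul_le_mul_of_nonneg_left hQ (by positivity)
  refine hfinal.trans (le_of_eq ?_)
  have hexp : a^(1+2*β) = a^(2*β-1) * a^2 := by
    rw [← Real.rpow_natCast a 2, ← Real.rpow_add ha]
    norm_num
    congr 1
    ring
  rw [hexp]
  field_simp

/-- The dyadic averages converge to `g 0`. -/
lemma avg_tendsto (hg : Continuous g) {a : ℝ} (ha : 0 < a) :
    Filter.Tendsto (fun n : ℕ => avgH g (a / 2 ^ n)) Filter.atTop (nhds (g 0)) := by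
  rw [Metric.tendsto_atTop]
  intro ε hε
  obtain ⟨δ, hδ, hcont⟩ := Metric.continuous_iff.mp hg 0 (ε/2) (by linarith)
  obtain ⟨N, hN⟩ := pow_unbounded_of_one_lt (a/δ) (by norm_num : (1:ℝ) < 2)
  refine ⟨N, fun n hn => ?_⟩
  have h2n : (0:ℝ) < 2^n := by positivity
  set b := a / 2^n with hb
  have hbpos : 0 < b := by positivity
  have hbδ : b < δ := by
    rw [hb, div_lt_iff₀ h2n]
    have h2 : (2:ℝ)^N ≤ 2^n := pow_le_pow_right₀ (by norm_num) hn
    rw [div_lt_iff₀ hδ] at hN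
    nlinarith
  have hint : IntegrableOn g (Ioo (b/2) b) volume :=
    (hg.continuousOn.integrableOn_compact isCompact_Icc).mono_set Ioo_subset_Icc_self
  have h1 : avgH g b - g 0 = (2/b) • ∫ v in Ioo (b/2) b, (g v - g 0) := by
    rw [integral_sub hint ((integrableOn_const_iff (C := g 0)).2 (Or.inr measure_Ioo_lt_top)), smul_sub,
      setIntegral_const, Measure.real, Real.volume_Ioo, ENNReal.toReal_ofReal (by linarith), avgH]
    congr 1
    rw [smul_smul, show (2/b) * (b - b/2) = 1 from by field_simp; ring, one_smul]
  have h2 : ‖avgH g b - g 0‖ ≤ ε/2 := by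
    rw [h1, norm_smul, Real.norm_eq_abs, abs_of_pos (by positivity)]
    have hb2 : ‖∫ v in Ioo (b/2) b, (g v - g 0)‖ ≤ (ε/2) * (volume (Ioo (b/2) b)).toReal := by
      apply norm_setIntegral_le_of_norm_le_const measure_Ioo_lt_top
      intro v hv
      simp only [Set.mem_Ioo] at hv
      have hd : dist (g v) (g 0) < ε/2 := hcont v (by
        simp only [Real.dist_eq, sub_zero]
        rw [abs_of_pos (by linarith)]
        exact lt_trans hv.2 hbδ)
      rw [← dist_eq_norm]
      exact le_of_lt hd
    calc (2/b) * ‖∫ v in Ioo (b/2) b, (g v - g 0)‖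
        ≤ (2/b) * ((ε/2) * (volume (Ioo (b/2) b)).toReal) :=
          mul_le_mul_of_nonneg_left hb2 (by positivity)
      _ = ε/2 := by
          rw [Real.volume_Ioo, ENNReal.toReal_ofReal (by linarith)]
          field_simp
          ring
  calc dist (avgH g (a/2^n)) (g 0) = ‖avgH g b - g 0‖ := by rw [dist_eq_norm]
    _ ≤ ε/2 := h2
    _ < ε := by linarith

/-- Telescoping estimate. -/
lemma telescope_est (hg : Continuous g) (hβ0 : 1 / 2 < β) (hfin : Sem g β T ≠ ⊤)
    {a : ℝ} (ha : 0 < a) (haT : a ≤ T) :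
    ‖avgH g a - g 0‖ ≤ Real.sqrt (8 * a ^ (2*β - 1) * (Sem g β T).toReal)
      * (1 - ((1:ℝ)/2) ^ (β - 1/2)) ⁻¹ := by
  have hS : (0:ℝ) ≤ (Sem g β T).toReal := ENNReal.toReal_nonneg
  set S := (Sem g β T).toReal with hSdef
  set ρ := ((1:ℝ)/2) ^ (β - 1/2) with hρdef
  have hρ0 : 0 < ρ := Real.rpow_pos_of_pos (by norm_num) _
  have hρ1 : ρ < 1 := Real.rpow_lt_one (by norm_num) (by norm_num) (by linarith)
  set E := Real.sqrt (8 * a ^ (2*β - 1) * S) with hEdef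
  have hE0 : 0 ≤ E := Real.sqrt_nonneg _
  have hE2 : E^2 = 8 * a ^ (2*β - 1) * S := Real.sq_sqrt (by positivity)
  have hρsq : ρ^2 = ((1:ℝ)/2) ^ (2*β - 1) := by
    rw [hρdef, ← Real.rpow_natCast (((1:ℝ)/2) ^ (β - 1/2)) 2, ← Real.rpow_mul (by norm_num)]
    norm_num
    congr 1
    ring
  set b : ℕ → V := fun n => avgH g (a / 2^n) with hbdef
  have hdist : ∀ n, dist (b n) (b (n+1)) ≤ E * ρ^n := by
    intro n
    have h2n : (0:ℝ) < 2^n := by positivity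
    have hc0 : 0 < a / 2^n := by positivity
    have hcT : a / 2^n ≤ T := by
      calc a / 2^n ≤ a / 1 := by
            apply div_le_div_of_nonneg_left ha.le (by norm_num) (one_le_pow₀ (by norm_num))
        _ = a := by norm_num
        _ ≤ T := haT
    have hcore := core_est hg hβ0 hfin hc0 hcT
    have hsucc : b (n+1) = avgH g ((a / 2^n)/2) := by
      show avgH g (a / 2^(n+1)) = avgH g ((a / 2^n)/2)
      congr 1
      rw [pow_succ]
      ring
    have hcrp : (a / 2^n) ^ (2*β - 1) = a ^ (2*β - 1) * (ρ^2)^n := by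
      rw [hρsq, div_eq_mul_inv, Real.mul_rpow ha.le (by positivity)]
      congr 1
      rw [show ((2:ℝ)^n)⁻¹ = ((1:ℝ)/2)^n from by rw [one_div, inv_pow],
        ← Real.rpow_natCast ((1:ℝ)/2) n, ← Real.rpow_mul (by norm_num : (0:ℝ) ≤ 1/2),
        ← Real.rpow_natCast (((1:ℝ)/2) ^ (2*β-1)) n,
        ← Real.rpow_mul (by norm_num : (0:ℝ) ≤ 1/2)]
      congr 1
      ring
    have hsq : dist (b n) (b (n+1))^2 ≤ (E * ρ^n)^2 := by
      rw [dist_eq_norm, hsucc]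
      calc ‖b n - avgH g ((a / 2^n)/2)‖^2 ≤ 8 * (a / 2^n) ^ (2*β - 1) * S := hcore
        _ = (E * ρ^n)^2 := by
            rw [hcrp, mul_pow, hE2, ← pow_mul, mul_comm (2:ℕ) n, pow_mul]
            ring
    calc dist (b n) (b (n+1)) = Real.sqrt (dist (b n) (b (n+1))^2) :=
          (Real.sqrt_sq dist_nonneg).symm
      _ ≤ Real.sqrt ((E * ρ^n)^2) := Real.sqrt_le_sqrt hsq
      _ = E * ρ^n := Real.sqrt_sq (by positivity)
  have hsum : Summable (fun n => E * ρ^n) :=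
    (summable_geometric_of_lt_one hρ0.le hρ1).mul_left E
  have htend : Filter.Tendsto b Filter.atTop (nhds (g 0)) := avg_tendsto hg ha
  have hkey := dist_le_tsum_of_dist_le_of_tendsto₀ _ hdist hsum htend
  have htsum : ∑' n : ℕ, E * ρ^n = E * (1 - ρ)⁻¹ := by
    rw [tsum_mul_left, tsum_geometric_of_lt_one hρ0.le hρ1]
  have hb0 : b 0 = avgH g a := by
    rw [hbdef]
    norm_num
  rw [← dist_eq_norm, ← hb0]
  rw [htsum] at hkey
  exact hkey

/-- Pointwise estimate: distance from `g t` to the average at scale `t`. -/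
lemma point_avg_est (hg : Continuous g) (hβ0 : 1 / 2 < β) {t : ℝ} (ht : 0 < t)
    (hfin : (∫⁻ s in Ioo (0:ℝ) t, kern g β t s) ≠ ⊤) :
    ‖g t - avgH g t‖ ^ 2 ≤ 2 * t ^ (2*β) * (∫⁻ s in Ioo (0:ℝ) t, kern g β t s).toReal := by
  have hp : (0:ℝ) < 1 + 2*β := by linarith
  set F := ∫⁻ s in Ioo (0:ℝ) t, kern g β t s with hF
  set I := Ioo (t/2) t with hI
  haveI : IsFiniteMeasure (volume.restrict I) :=
    ⟨by rw [Measure.restrict_apply_univ]; exact measure_Ioo_lt_top⟩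
  have hint : IntegrableOn g I volume :=
    (hg.continuousOn.integrableOn_compact isCompact_Icc).mono_set Ioo_subset_Icc_self
  have hid : g t - avgH g t = (2/t) • ∫ v in I, (g t - g v) := by
    rw [integral_sub ((integrableOn_const_iff (C := g t)).2 (Or.inr measure_Ioo_lt_top)) hint, smul_sub,
      setIntegral_const, Measure.real, Real.volume_Ioo, ENNReal.toReal_ofReal (by linarith)]
    congr 1
    rw [smul_smul, show (2/t)*(t - t/2) = 1 from by field_simp; ring, one_smul]
  obtain ⟨M, hM⟩ := (isCompact_Icc : IsCompact (Icc (0:ℝ) t)).exists_bound_of_continuousOn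
    hg.continuousOn
  have hmem : MemLp (fun v => g t - g v) 2 (volume.restrict I) := by
    apply memL2_of_bound ((continuous_const.sub hg).aestronglyMeasurable.restrict) (M + M)
    filter_upwards [ae_restrict_mem measurableSet_Ioo] with v hv
    simp only [hI, Set.mem_Ioo] at hv
    have b1 : ‖g t‖ ≤ M := hM _ ⟨le_of_lt ht, le_refl t⟩
    have b2 : ‖g v‖ ≤ M := hM _ ⟨by linarith [hv.1], le_of_lt hv.2⟩
    calc ‖g t - g v‖ ≤ ‖g t‖ + ‖g v‖ := norm_sub_le _ _
      _ ≤ M + M := add_le_add b1 b2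
  have hCS := norm_integral_sq_le (volume.restrict I) hmem
  have hQ : ∫ v in I, ‖g t - g v‖^2 ≤ t^(1+2*β) * F.toReal := by
    have hB : ENNReal.ofReal (t^(1+2*β)) * F ≠ ⊤ := ENNReal.mul_ne_top ENNReal.ofReal_ne_top hfin
    have hle : ∫⁻ v in I, ENNReal.ofReal (‖g t - g v‖^2) ≤ ENNReal.ofReal (t^(1+2*β)) * F := by
      calc ∫⁻ v in I, ENNReal.ofReal (‖g t - g v‖^2)
          ≤ ∫⁻ v in I, ENNReal.ofReal (t^(1+2*β)) * kern g β t v := by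
            apply setLIntegral_mono' measurableSet_Ioo
            intro v hv
            simp only [hI, Set.mem_Ioo] at hv
            have hd : (0:ℝ) < (t - v)^(1+2*β) := Real.rpow_pos_of_pos (by linarith) _
            have hda : (t - v)^(1+2*β) ≤ t^(1+2*β) :=
              Real.rpow_le_rpow (by linarith) (by linarith) hp.le
            rw [kern, ← ENNReal.ofReal_mul (by positivity)]
            apply ENNReal.ofReal_le_ofReal
            calc ‖g t - g v‖^2 = (‖g t - g v‖^2/(t-v)^(1+2*β)) * ((t-v)^(1+2*β)) :=
                  (div_mul_cancel₀ _ hd.ne').symm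
              _ ≤ (‖g t - g v‖^2/(t-v)^(1+2*β)) * t^(1+2*β) :=
                  mul_le_mul_of_nonneg_left hda (by positivity)
              _ = t^(1+2*β) * (‖g t - g v‖^2/(t-v)^(1+2*β)) := mul_comm _ _
        _ = ENNReal.ofReal (t^(1+2*β)) * ∫⁻ v in I, kern g β t v :=
            lintegral_const_mul' _ _ ENNReal.ofReal_ne_top
        _ ≤ ENNReal.ofReal (t^(1+2*β)) * F := by
            apply mul_le_mul_right
            apply lintegral_mono_set
            intro v hv
            simp only [hI, Set.mem_Ioo] at hv ⊢
            exact ⟨by linarith [hv.1], hv.2⟩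
    have := real_int_le_toReal (volume.restrict I)
      (ae_of_all _ fun v => sq_nonneg _)
      ((continuous_const.sub hg).norm.pow 2).aestronglyMeasurable.restrict hB hle
    rwa [ENNReal.toReal_mul, ENNReal.toReal_ofReal (by positivity)] at this
  have huniv : ((volume.restrict I) univ).toReal = t/2 := by
    rw [Measure.restrict_apply_univ, hI, Real.volume_Ioo, ENNReal.toReal_ofReal (by linarith)]
    ring
  rw [hid, norm_smul, Real.norm_eq_abs, mul_pow, sq_abs]
  calc (2/t)^2 * ‖∫ v in I, (g t - g v)‖^2
      ≤ (2/t)^2 * (((volume.restrict I) univ).toReal * ∫ v in I, ‖g t - g v‖^2) :=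
        mul_le_mul_of_nonneg_left hCS (by positivity)
    _ ≤ (2/t)^2 * ((t/2) * (t^(1+2*β) * F.toReal)) := by
        rw [huniv]
        apply mul_le_mul_of_nonneg_left _ (by positivity)
        exact mul_le_mul_of_nonneg_left hQ (by linarith)
    _ = 2 * t^(2*β) * F.toReal := by
        rw [show (1+2*β) = 2*β + 1 from by ring, Real.rpow_add ht, Real.rpow_one]
        field_simp

/-- The average at scale `T` is controlled by the `L²` norm. -/
lemma avg_L2_est (hg : Continuous g) (hT : 0 < T) :
    ‖avgH g T‖ ^ 2 ≤ (2 / T) * ∫ t in Ioo (0:ℝ) T, ‖g t‖ ^ 2 := by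
  set I := Ioo (T/2) T with hI
  haveI : IsFiniteMeasure (volume.restrict I) :=
    ⟨by rw [Measure.restrict_apply_univ]; exact measure_Ioo_lt_top⟩
  obtain ⟨M, hM⟩ := (isCompact_Icc : IsCompact (Icc (0:ℝ) T)).exists_bound_of_continuousOn
    hg.continuousOn
  have hmem : MemLp g 2 (volume.restrict I) := by
    apply memL2_of_bound (hg.aestronglyMeasurable.restrict) M
    filter_upwards [ae_restrict_mem measurableSet_Ioo] with v hv
    simp only [hI, Set.mem_Ioo] at hv
    exact hM _ ⟨by linarith [hv.1], le_of_lt hv.2⟩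
  have hCS := norm_integral_sq_le (volume.restrict I) hmem
  have huniv : ((volume.restrict I) univ).toReal = T/2 := by
    rw [Measure.restrict_apply_univ, hI, Real.volume_Ioo, ENNReal.toReal_ofReal (by linarith)]
    ring
  have hmono : ∫ v in I, ‖g v‖^2 ≤ ∫ t in Ioo (0:ℝ) T, ‖g t‖^2 := by
    apply setIntegral_mono_set
    · exact ((hg.norm.pow 2).continuousOn.integrableOn_compact
        isCompact_Icc).mono_set Ioo_subset_Icc_self
    · exact ae_of_all _ fun v => sq_nonneg _
    · apply HasSubset.Subset.eventuallyLE
      intro v hv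
      simp only [hI, Set.mem_Ioo] at hv ⊢
      exact ⟨by linarith [hv.1], hv.2⟩
  rw [avgH, norm_smul, Real.norm_eq_abs, mul_pow, sq_abs]
  calc (2/T)^2 * ‖∫ v in I, g v‖^2 ≤ (2/T)^2 * ((T/2) * ∫ v in I, ‖g v‖^2) := by
        rw [← huniv]
        exact mul_le_mul_of_nonneg_left hCS (by positivity)
    _ ≤ (2/T)^2 * ((T/2) * ∫ t in Ioo (0:ℝ) T, ‖g t‖^2) := by
        apply mul_le_mul_of_nonneg_left _ (by positivity)
        exact mul_le_mul_of_nonneg_left hmono (by linarith)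
    _ = (2/T) * ∫ t in Ioo (0:ℝ) T, ‖g t‖^2 := by
        field_simp

end Main

/-- **Proposition 3.5, case β > 1/2.** On `H^β(0,T;V)`, `β ∈ (1/2,1)`,
the norm `(‖f(0)‖² + [f]²_{H^β})^{1/2}` is equivalent to the standard norm
`(‖f‖²_{L²} + [f]²_{H^β})^{1/2}`. -/
theorem value_at_zero_norm_equivalent {V : Type*} [NormedAddCommGroup V]
    [InnerProductSpace ℂ V] [CompleteSpace V]
    (β T : ℝ) (hβ0 : 1 / 2 < β) (hβ1 : β < 1) (hT : 0 < T) :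
    ∃ c > (0:ℝ), ∃ C > (0:ℝ), ∀ f : ℝ → V, ContinuousOn f (Icc 0 T) →
      (∫⁻ t in Ioo (0:ℝ) T, ∫⁻ s in Ioo (0:ℝ) t,
          ENNReal.ofReal (‖f t - f s‖ ^ 2 / (t - s) ^ (1 + 2 * β)) ≠ ⊤) →
      (c * (‖f 0‖ ^ 2 +
            (∫⁻ t in Ioo (0:ℝ) T, ∫⁻ s in Ioo (0:ℝ) t,
              ENNReal.ofReal (‖f t - f s‖ ^ 2 / (t - s) ^ (1 + 2 * β))).toReal)
          ≤ (∫ t in Ioo (0:ℝ) T, ‖f t‖ ^ 2) +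
            (∫⁻ t in Ioo (0:ℝ) T, ∫⁻ s in Ioo (0:ℝ) t,
              ENNReal.ofReal (‖f t - f s‖ ^ 2 / (t - s) ^ (1 + 2 * β))).toReal) ∧
      ((∫ t in Ioo (0:ℝ) T, ‖f t‖ ^ 2) +
            (∫⁻ t in Ioo (0:ℝ) T, ∫⁻ s in Ioo (0:ℝ) t,
              ENNReal.ofReal (‖f t - f s‖ ^ 2 / (t - s) ^ (1 + 2 * β))).toReal
          ≤ C * (‖f 0‖ ^ 2 +
            (∫⁻ t in Ioo (0:ℝ) T, ∫⁻ s in Ioo (0:ℝ) t,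
              ENNReal.ofReal (‖f t - f s‖ ^ 2 / (t - s) ^ (1 + 2 * β))).toReal)) := by
  have h2b1 : (0:ℝ) < 2*β - 1 := by linarith
  set ρ := ((1:ℝ)/2) ^ (β - 1/2) with hρdef
  have hρ0 : 0 < ρ := Real.rpow_pos_of_pos (by norm_num) _
  have hρ1 : ρ < 1 := Real.rpow_lt_one (by norm_num) (by norm_num) (by linarith)
  have hir : 0 < 1 - ρ := by linarith
  have hTp : 0 < T ^ (2*β-1) := Real.rpow_pos_of_pos hT _
  have hTp2 : 0 < T ^ (2*β) := Real.rpow_pos_of_pos hT _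
  set A := 16 * T^(2*β-1) / (1-ρ)^2 with hA
  have hApos : 0 < A := by positivity
  set K₁ := max (4/T) (A+1) with hK₁
  have hK₁pos : 0 < K₁ := lt_of_lt_of_le (by positivity) (le_max_left _ _)
  set C := max (2*T) (2*T*A + 8*T^(2*β) + 1) with hC
  have hCpos : 0 < C := lt_of_lt_of_le (by positivity) (le_max_left _ _)
  refine ⟨K₁⁻¹, by positivity, C, hCpos, ?_⟩
  intro f hf hfin
  set g : ℝ → V := fun x => f (max 0 (min x T)) with hgdef
  have hclamp : ∀ x, max 0 (min x T) ∈ Icc (0:ℝ) T :=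
    fun x => ⟨le_max_left _ _, max_le hT.le (min_le_right _ _)⟩
  have hgc : Continuous g :=
    hf.comp_continuous (continuous_const.max (continuous_id.min continuous_const)) hclamp
  have heq : ∀ x ∈ Icc (0:ℝ) T, g x = f x := by
    intro x hx
    show f (max 0 (min x T)) = f x
    rw [min_eq_left hx.2, max_eq_right hx.1]
  have hf0 : f 0 = g 0 := (heq 0 ⟨le_refl 0, hT.le⟩).symm
  have hSem : (∫⁻ t in Ioo (0:ℝ) T, ∫⁻ s in Ioo (0:ℝ) t,
      ENNReal.ofReal (‖f t - f s‖ ^ 2 / (t - s) ^ (1 + 2 * β))) = Sem g β T := by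
    rw [Sem]
    apply setLIntegral_congr_fun measurableSet_Ioo
    intro t ht
    apply setLIntegral_congr_fun measurableSet_Ioo
    intro s hs
    rw [kern, heq t ⟨ht.1.le, ht.2.le⟩, heq s ⟨hs.1.le, le_trans hs.2.le ht.2.le⟩]
  have hL : (∫ t in Ioo (0:ℝ) T, ‖f t‖ ^ 2) = ∫ t in Ioo (0:ℝ) T, ‖g t‖ ^ 2 := by
    apply setIntegral_congr_fun measurableSet_Ioo
    intro t ht
    show ‖f t‖ ^ 2 = ‖g t‖ ^ 2
    rw [heq t ⟨ht.1.le, ht.2.le⟩]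
  rw [hSem] at hfin
  rw [hSem, hf0, hL]
  set S := (Sem g β T).toReal with hSdef
  set L := ∫ t in Ioo (0:ℝ) T, ‖g t‖ ^ 2 with hLdef
  have hS0 : 0 ≤ S := ENNReal.toReal_nonneg
  have hL0 : 0 ≤ L := setIntegral_nonneg measurableSet_Ioo (fun t _ => sq_nonneg _)
  -- direction 1
  have hq3T : ‖avgH g T - g 0‖^2 ≤ (A/2) * S := by
    have t1 := telescope_est hgc hβ0 hfin hT le_rfl
    calc ‖avgH g T - g 0‖^2 ≤ (Real.sqrt (8*T^(2*β-1)*S) * (1-ρ)⁻¹)^2 :=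
          pow_le_pow_left₀ (norm_nonneg _) t1 2
      _ = (8*T^(2*β-1)*S) * ((1-ρ)⁻¹)^2 := by
          rw [mul_pow, Real.sq_sqrt (by positivity)]
      _ = (A/2) * S := by rw [hA]; field_simp; ring
  have d1 : ‖g 0‖^2 ≤ (4/T)*L + A*S := by
    have t2 := avg_L2_est hgc hT
    have e1 : ‖g 0‖ ≤ ‖avgH g T‖ + ‖avgH g T - g 0‖ := by
      calc ‖g 0‖ = ‖avgH g T - (avgH g T - g 0)‖ := by congr 1; abel
        _ ≤ ‖avgH g T‖ + ‖avgH g T - g 0‖ := norm_sub_le _ _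
    have e2 : ‖g 0‖^2 ≤ 2*‖avgH g T‖^2 + 2*‖avgH g T - g 0‖^2 :=
      sq_triangle e1 (norm_nonneg _) (norm_nonneg _) (norm_nonneg _)
    calc ‖g 0‖^2 ≤ 2*‖avgH g T‖^2 + 2*‖avgH g T - g 0‖^2 := e2
      _ ≤ 2*((2/T)*L) + 2*((A/2)*S) := by
          have := mul_le_mul_of_nonneg_left t2 (by norm_num : (0:ℝ) ≤ 2)
          have := mul_le_mul_of_nonneg_left hq3T (by norm_num : (0:ℝ) ≤ 2)
          linarith
      _ = (4/T)*L + A*S := by ring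
  -- direction 2
  have hmeasφ := inner_lint_measurable hgc β
  have hfin' : (∫⁻ t in Ioo (0:ℝ) T, ∫⁻ s in Ioo (0:ℝ) t, kern g β t s) ≠ ⊤ := hfin
  have hfinae : ∀ᵐ t ∂(volume.restrict (Ioo (0:ℝ) T)),
      (∫⁻ s in Ioo (0:ℝ) t, kern g β t s) < ⊤ := ae_lt_top hmeasφ hfin'
  have hφint : Integrable (fun t => (∫⁻ s in Ioo (0:ℝ) t, kern g β t s).toReal)
      (volume.restrict (Ioo (0:ℝ) T)) :=
    integrable_toReal_of_lintegral_ne_top hmeasφ.aemeasurable hfin'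
  have hφeq : ∫ t in Ioo (0:ℝ) T, (∫⁻ s in Ioo (0:ℝ) t, kern g β t s).toReal = S := by
    rw [integral_toReal hmeasφ.aemeasurable hfinae]
    rfl
  have hptwise : ∀ᵐ t ∂(volume.restrict (Ioo (0:ℝ) T)),
      ‖g t‖^2 ≤ (2*‖g 0‖^2 + 2*A*S) + 8*T^(2*β) * (∫⁻ s in Ioo (0:ℝ) t, kern g β t s).toReal := by
    filter_upwards [hfinae, ae_restrict_mem measurableSet_Ioo] with t hft ht
    obtain ⟨ht0, htT⟩ := ht
    have h1 := point_avg_est hgc hβ0 ht0 hft.ne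
    have t1 := telescope_est hgc hβ0 hfin ht0 htT.le
    have hq3 : ‖avgH g t - g 0‖^2 ≤ (A/2)*S := by
      have h3 : t^(2*β-1) ≤ T^(2*β-1) := Real.rpow_le_rpow ht0.le htT.le (by linarith)
      calc ‖avgH g t - g 0‖^2 ≤ (Real.sqrt (8*t^(2*β-1)*S) * (1-ρ)⁻¹)^2 :=
            pow_le_pow_left₀ (norm_nonneg _) t1 2
        _ = (8*t^(2*β-1)*S) * ((1-ρ)⁻¹)^2 := by rw [mul_pow, Real.sq_sqrt (by positivity)]
        _ ≤ (8*T^(2*β-1)*S) * ((1-ρ)⁻¹)^2 := by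
            apply mul_le_mul_of_nonneg_right _ (by positivity)
            nlinarith
        _ = (A/2)*S := by rw [hA]; field_simp; ring
    have hφt0 : (0:ℝ) ≤ (∫⁻ s in Ioo (0:ℝ) t, kern g β t s).toReal := ENNReal.toReal_nonneg
    have h4 : t^(2*β) ≤ T^(2*β) := Real.rpow_le_rpow ht0.le htT.le (by linarith)
    have q2 : ‖g t - avgH g t‖^2 ≤ 2*T^(2*β)*(∫⁻ s in Ioo (0:ℝ) t, kern g β t s).toReal :=
      h1.trans (mul_le_mul_of_nonneg_right (by linarith) hφt0)
    have e1 : ‖g t - g 0‖ ≤ ‖g t - avgH g t‖ + ‖avgH g t - g 0‖ := by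
      calc ‖g t - g 0‖ = ‖(g t - avgH g t) + (avgH g t - g 0)‖ := by congr 1; abel
        _ ≤ _ := norm_add_le _ _
    have e2 : ‖g t - g 0‖^2 ≤ 2*‖g t - avgH g t‖^2 + 2*‖avgH g t - g 0‖^2 :=
      sq_triangle e1 (norm_nonneg _) (norm_nonneg _) (norm_nonneg _)
    have e3 : ‖g t‖ ≤ ‖g 0‖ + ‖g t - g 0‖ := by
      calc ‖g t‖ = ‖g 0 + (g t - g 0)‖ := by congr 1; abel
        _ ≤ _ := norm_add_le _ _
    have e4 : ‖g t‖^2 ≤ 2*‖g 0‖^2 + 2*‖g t - g 0‖^2 :=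
      sq_triangle e3 (norm_nonneg _) (norm_nonneg _) (norm_nonneg _)
    linarith
  have d2 : L ≤ T*(2*‖g 0‖^2 + 2*A*S) + 8*T^(2*β) * S := by
    have hLint : Integrable (fun t => ‖g t‖^2) (volume.restrict (Ioo (0:ℝ) T)) :=
      ((hgc.norm.pow 2).continuousOn.integrableOn_compact isCompact_Icc).mono_set
        Ioo_subset_Icc_self
    have hc1 : Integrable (fun _ : ℝ => 2*‖g 0‖^2 + 2*A*S) (volume.restrict (Ioo (0:ℝ) T)) :=
      integrable_const _
    have hc2 : Integrable (fun t => 8*T^(2*β) *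
        (∫⁻ s in Ioo (0:ℝ) t, kern g β t s).toReal) (volume.restrict (Ioo (0:ℝ) T)) :=
      hφint.const_mul (8*T^(2*β))
    have hkey := integral_mono_ae hLint (hc1.add hc2) hptwise
    have hsum : (∫ t in Ioo (0:ℝ) T, ((2*‖g 0‖^2 + 2*A*S) + 8*T^(2*β) *
        (∫⁻ s in Ioo (0:ℝ) t, kern g β t s).toReal))
        = (2*‖g 0‖^2 + 2*A*S)*T + 8*T^(2*β)*S := by
      rw [integral_add hc1 hc2, integral_const, Measure.real, integral_const_mul, hφeq,
        Measure.restrict_apply_univ, Real.volume_Ioo, ENNReal.toReal_ofReal (by linarith),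
        smul_eq_mul, sub_zero]
      ring
    have hkey2 : L ≤ (2*‖g 0‖^2 + 2*A*S)*T + 8*T^(2*β)*S := hkey.trans_eq hsum
    linarith
  constructor
  · have hX : ‖g 0‖^2 + S ≤ K₁ * (L + S) := by
      have h4T : 4/T ≤ K₁ := le_max_left _ _
      have hA1 : A + 1 ≤ K₁ := le_max_right _ _
      nlinarith [mul_le_mul_of_nonneg_right h4T hL0, mul_le_mul_of_nonneg_right hA1 hS0]
    have h5 := mul_le_mul_of_nonneg_left hX (inv_nonneg.mpr hK₁pos.le)
    rwa [← mul_assoc, inv_mul_cancel₀ hK₁pos.ne', one_mul] at h5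
  · have h2T : 2*T ≤ C := le_max_left _ _
    have hC2 : 2*T*A + 8*T^(2*β) + 1 ≤ C := le_max_right _ _
    nlinarith [d2, sq_nonneg ‖g 0‖, mul_le_mul_of_nonneg_right h2T (sq_nonneg ‖g 0‖),
      mul_le_mul_of_nonneg_right hC2 hS0, mul_le_mul_of_nonneg_left hApos.le hT.le]
end

section
/- Let $V$ be a Hilbert space, $0 < T < T'$, $h \in L^1(0,T')$ and $z \in L^2(0,T';V)$. Write $h_0 := h|_{(0,T)}$, $h_1 := h|_{(T,T')}$, $z_0 := z|_{(0,T)}$, $z_1 := z|_{(T,T')}$, and let $\tilde h_0, \tilde z_0$ denote trivial extensions by zero to $(0,T')$. If $T' \le 2T$, then for almost every $t \in (0, T'-T)$: $(h * z)(T + t) = (\tilde h_0 * \tilde z_0)(T+t) + \big(h_1(\cdot + T) * z_0|_{(0, T'-T)}\big)(t) + \big(h_0|_{(0,T'-T)} * z_1(\cdot + T)\big)(t)$, where all convolutions are truncated convolutions $\int_0^t$. -/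
open MeasureTheory Set

/-- **Lemma 4.3(III).** Decomposition of the truncated convolution past
time `T`, when `T < T' ≤ 2T`: for a.e. `t ∈ (0, T'-T)`,
`(h*z)(T+t) = (h̃₀ * z̃₀)(T+t) + (h₁(·+T) * z₀)(t) + (h₀ * z₁(·+T))(t)`. -/
theorem convolution_splitting_three_terms {V : Type*} [NormedAddCommGroup V]
    [InnerProductSpace ℂ V] [CompleteSpace V]
    (T T' : ℝ) (hT : 0 < T) (hTT' : T < T') (hT2 : T' ≤ 2 * T)
    (h : ℝ → ℂ) (z : ℝ → V)
    (hh : IntegrableOn h (Ioo 0 T'))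
    (hzm : AEStronglyMeasurable z (volume.restrict (Ioo 0 T')))
    (hz2 : IntegrableOn (fun t => ‖z t‖ ^ 2) (Ioo 0 T')) :
    ∀ᵐ t ∂(volume.restrict (Ioo 0 (T' - T))),
      (∫ s in Ioo (0:ℝ) (T + t), h (T + t - s) • z s)
        = (∫ s in Ioo (0:ℝ) (T + t),
            (if T + t - s < T then h (T + t - s) else 0) •
              (if s < T then z s else 0)) +
          (∫ s in Ioo (0:ℝ) t, h (t - s + T) • z s) +
          ∫ s in Ioo (0:ℝ) t, h (t - s) • z (s + T) := by
  -- z is integrable on (0,T')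
  have hzi : IntegrableOn z (Ioo 0 T') := by
    refine Integrable.mono' ((integrableOn_const (C := (1:ℝ))
        measure_Ioo_lt_top.ne).add hz2) hzm ?_
    refine Filter.Eventually.of_forall fun s => ?_
    simp only [Pi.add_apply]
    rcases le_or_gt ‖z s‖ 1 with hs | hs
    · nlinarith [sq_nonneg (‖z s‖)]
    · nlinarith
  set H : ℝ → ℂ := (Ioo 0 T').indicator h with hH
  set Z : ℝ → V := (Ioo 0 T').indicator z with hZ
  have HI : Integrable H := (integrable_indicator_iff measurableSet_Ioo).mpr hh
  have ZI : Integrable Z := (integrable_indicator_iff measurableSet_Ioo).mpr hzi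
  have key : ∀ᵐ x : ℝ, Integrable (fun s => H (x - s) • Z s) := by
    have := ZI.ae_convolution_exists
      (L := (ContinuousLinearMap.lsmul ℂ ℂ : ℂ →L[ℂ] V →L[ℂ] V).flip) HI
    filter_upwards [this] with x hx
    simpa [ConvolutionExistsAt] using hx
  have key2 : ∀ᵐ t : ℝ, Integrable (fun s => H (T + t - s) • Z s) := by
    refine ae_of_ae_map (p := fun x => Integrable (fun s => H (x - s) • Z s) volume)
      (measurable_const_add T).aemeasurable ?_
    rwa [map_add_left_eq_self]
  filter_upwards [ae_restrict_of_ae key2, ae_restrict_mem measurableSet_Ioo] with t hint ht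
  obtain ⟨ht0, ht1⟩ := ht
  have htT : t < T := lt_of_lt_of_le ht1 (by linarith)
  have hTt : T + t < T' := by linarith
  set f : ℝ → V := fun s => h (T + t - s) • z s with hf
  have heq : EqOn (fun s => H (T + t - s) • Z s) f (Ioo 0 (T + t)) := by
    intro s hs
    have h1 : T + t - s ∈ Ioo (0:ℝ) T' := ⟨by simp at hs ⊢; linarith [hs.2], by linarith [hs.1]⟩
    have h2 : s ∈ Ioo (0:ℝ) T' := ⟨hs.1, by linarith [hs.2]⟩
    simp only [hH, hZ, f, indicator_of_mem h1, indicator_of_mem h2]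
  have hfi : IntegrableOn f (Ioc 0 (T + t)) := by
    rw [integrableOn_Ioc_iff_integrableOn_Ioo]
    exact (hint.integrableOn.congr_fun heq measurableSet_Ioo)
  -- split of the domain
  have hsub1 : Ioc (0:ℝ) t ⊆ Ioc 0 (T + t) := Ioc_subset_Ioc le_rfl (by linarith)
  have hsub2 : Ioc t T ⊆ Ioc 0 (T + t) := Ioc_subset_Ioc (le_of_lt ht0) (by linarith)
  have hsub3 : Ioc T (T + t) ⊆ Ioc 0 (T + t) := Ioc_subset_Ioc (le_of_lt hT) le_rfl
  have hsplit : ∫ s in Ioc 0 (T + t), f s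
      = (∫ s in Ioc t T, f s) + (∫ s in Ioc 0 t, f s) + ∫ s in Ioc T (T + t), f s := by
    rw [← Ioc_union_Ioc_eq_Ioc (le_of_lt ht0) (by linarith : t ≤ T + t),
      setIntegral_union (Ioc_disjoint_Ioc_of_le le_rfl) measurableSet_Ioc
        (hfi.mono_set hsub1) (hfi.mono_set (Ioc_subset_Ioc (le_of_lt ht0) le_rfl))]
    rw [← Ioc_union_Ioc_eq_Ioc (le_of_lt htT) (by linarith : T ≤ T + t),
      setIntegral_union (Ioc_disjoint_Ioc_of_le le_rfl) measurableSet_Ioc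
        (hfi.mono_set hsub2) (hfi.mono_set hsub3)]
    abel
  -- term A
  have hA : (∫ s in Ioo (0:ℝ) (T + t),
      (if T + t - s < T then h (T + t - s) else 0) • (if s < T then z s else 0))
      = ∫ s in Ioc t T, f s := by
    rw [integral_Ioc_eq_integral_Ioo]
    rw [setIntegral_congr_fun measurableSet_Ioo
      (g := fun s => (Ioo t T).indicator f s) ?_]
    · rw [setIntegral_indicator measurableSet_Ioo,
        inter_eq_self_of_subset_right (Ioo_subset_Ioo (le_of_lt ht0) (by linarith))]
    · intro s hs
      by_cases h1 : t < s
      · by_cases h2 : s < T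
        · have : T + t - s < T := by linarith
          simp [this, h2, indicator_of_mem (show s ∈ Ioo t T from ⟨h1, h2⟩), f]
        · have : ¬ (T + t - s < T) ∨ True := Or.inr trivial
          simp [h2, indicator_of_notMem (show s ∉ Ioo t T from fun hc => h2 hc.2)]
      · have : ¬ (T + t - s < T) := by push_neg at h1 ⊢; linarith
        simp [this, indicator_of_notMem (show s ∉ Ioo t T from fun hc => h1 hc.1)]
  -- term B
  have hB : (∫ s in Ioo (0:ℝ) t, h (t - s + T) • z s) = ∫ s in Ioc 0 t, f s := by
    rw [integral_Ioc_eq_integral_Ioo]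
    refine setIntegral_congr_fun measurableSet_Ioo fun s _ => ?_
    simp only [f]; ring_nf
  -- term C
  have hC : (∫ s in Ioo (0:ℝ) t, h (t - s) • z (s + T)) = ∫ s in Ioc T (T + t), f s := by
    have e1 : (∫ s in Ioo (0:ℝ) t, h (t - s) • z (s + T)) = ∫ s in Ioo (0:ℝ) t, f (s + T) := by
      refine setIntegral_congr_fun measurableSet_Ioo fun s _ => ?_
      simp only [f]
      congr 1
      ring
    rw [e1, ← integral_Ioc_eq_integral_Ioo, ← intervalIntegral.integral_of_le (le_of_lt ht0),
      intervalIntegral.integral_comp_add_right f T,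
      intervalIntegral.integral_of_le (by linarith : (0:ℝ) + T ≤ t + T)]
    norm_num [add_comm t T]
  rw [show (∫ s in Ioo (0:ℝ) (T + t), h (T + t - s) • z s) = ∫ s in Ioc 0 (T + t), f s from
    (integral_Ioc_eq_integral_Ioo).symm, hsplit, hA, hB, hC]
end
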